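/- arXiv:1401.2523 — 6 statements merged into one kernel-verified Lean document; each statement's English description precedes it below -/
import Mathlib

section
/- Let D be a domain in ℝ^d satisfying condition (B') with constants δ > 0 and 0 ≤ α < 1. Then D satisfies condition (B) with the same constant δ and with β = (1 − α²)^{−1/2}; moreover for each x ∈ ∂D the same unit vector l_x can be used in both conditions. -/
open MeasureTheory ProbabilityTheory Set RealInnerProductSpace

noncomputable section

/-- `d`-dimensional Euclidean space. -/
abbrev Euc (d : ℕ) := EuclideanSpace ℝ (Fin d)

/-- The set `N_{x,r}` of inward unit normal vectors at `x` with radius `r`: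
`{n : ‖n‖ = 1, B(x - r n, r) ∩ D = ∅}`. -/
def normalSet {d : ℕ} (D : Set (Euc d)) (x : Euc d) (r : ℝ) : Set (Euc d) :=
  {n | ‖n‖ = 1 ∧ Metric.ball (x - r • n) r ∩ D = ∅}

/-- The set `N_x = ⋃_{r>0} N_{x,r}` of inward unit normal vectors at `x`. -/
def normalCone {d : ℕ} (D : Set (Euc d)) (x : Euc d) : Set (Euc d) :=
  ⋃ r > 0, normalSet D x r

/-- The cone `C(y, l, α) = {z : ⟨z − y, l⟩ ≥ α |z − y|}`. -/
def cone {d : ℕ} (y l : Euc d) (α : ℝ) : Set (Euc d) :=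
  {z | α * ‖z - y‖ ≤ ⟪z - y, l⟫}

/-- Condition (B) with constants `δ`, `β`. -/
def CondB {d : ℕ} (D : Set (Euc d)) (δ β : ℝ) : Prop :=
  ∀ x ∈ frontier D, ∃ l : Euc d, ‖l‖ = 1 ∧
    ∀ y ∈ Metric.ball x δ ∩ frontier D, ∀ n ∈ normalCone D y, 1 / β ≤ ⟪l, n⟫

/-- Condition (B') with constants `δ`, `α`. -/
def CondB' {d : ℕ} (D : Set (Euc d)) (δ α : ℝ) : Prop :=
  ∀ x ∈ frontier D, ∃ l : Euc d, ‖l‖ = 1 ∧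
    ∀ y ∈ Metric.ball x δ ∩ frontier D, cone y l α ∩ Metric.ball x δ ⊆ closure D

lemma exists_dir {d : ℕ} (l n : Euc d) (hl : ‖l‖ = 1) (hn : ‖n‖ = 1)
    (α : ℝ) (hα0 : 0 ≤ α) (hα1 : α < 1)
    (h : ⟪l, n⟫ < Real.sqrt (1 - α ^ 2)) :
    ∃ v : Euc d, ‖v‖ = 1 ∧ α ≤ ⟪v, l⟫ ∧ ⟪v, n⟫ < 0 := by
  set s := ⟪l, n⟫ with hs
  rcases lt_or_ge s 0 with hneg | hpos
  · refine ⟨l, hl, ?_, ?_⟩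
    · rw [real_inner_self_eq_norm_sq, hl]; nlinarith
    · rw [hs] at hneg; exact hneg
  · have hA2 : (0:ℝ) ≤ 1 - α ^ 2 := by nlinarith
    have hsqA := Real.sq_sqrt hA2
    have hAnn := Real.sqrt_nonneg (1 - α ^ 2)
    have hs2 : s ^ 2 < 1 - α ^ 2 := by nlinarith
    set w := n - s • l with hw
    have hnl : ⟪n, l⟫ = s := by rw [real_inner_comm]
    have hll : ⟪l, l⟫ = 1 := by rw [real_inner_self_eq_norm_sq, hl]; norm_num
    have hnn : ⟪n, n⟫ = 1 := by rw [real_inner_self_eq_norm_sq, hn]; norm_num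
    have hwl : ⟪w, l⟫ = 0 := by
      simp only [hw, inner_sub_left, real_inner_smul_left, hnl, hll]; ring
    have hlw : ⟪l, w⟫ = 0 := by rw [real_inner_comm]; exact hwl
    have hwn : ⟪w, n⟫ = 1 - s ^ 2 := by
      simp only [hw, inner_sub_left, real_inner_smul_left, hnn, ← hs]; ring
    have hww : ‖w‖ ^ 2 = 1 - s ^ 2 := by
      rw [← real_inner_self_eq_norm_sq]
      simp only [hw, inner_sub_left, inner_sub_right, real_inner_smul_left,
        real_inner_smul_right, hnn, hnl, hll, ← hs]
      ring
    have hwpos : 0 < ‖w‖ := by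
      rcases (norm_nonneg w).lt_or_eq with h' | h'
      · exact h'
      · exfalso; rw [← h'] at hww; nlinarith
    set A := Real.sqrt (1 - α ^ 2) with hA
    set c := A / ‖w‖ with hc
    refine ⟨α • l - c • w, ?_, ?_, ?_⟩
    · have hc2 : c ^ 2 * (1 - s ^ 2) = 1 - α ^ 2 := by
        rw [hc, div_pow, ← hww, ← hsqA]
        field_simp
      have hwwi : ⟪w, w⟫ = 1 - s ^ 2 := by
        rw [real_inner_self_eq_norm_sq, hww]
      have h2 : ‖α • l - c • w‖ ^ 2 = 1 := by
        rw [← real_inner_self_eq_norm_sq]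
        simp only [inner_sub_left, inner_sub_right, real_inner_smul_left,
          real_inner_smul_right, hll, hwl, hlw, hwwi]
        nlinarith [hc2]
      rw [← Real.sqrt_sq (norm_nonneg _), h2, Real.sqrt_one]
    · simp only [inner_sub_left, real_inner_smul_left, hll, hwl]
      norm_num
    · have key : α * s < A * ‖w‖ := by
        have hABnn : 0 ≤ A * ‖w‖ := mul_nonneg hAnn hwpos.le
        refine lt_of_pow_lt_pow_left₀ 2 hABnn ?_
        have : (A * ‖w‖) ^ 2 = (1 - α ^ 2) * (1 - s ^ 2) := by
          rw [mul_pow, hsqA, hww]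
        nlinarith
      have hcw : c * (1 - s ^ 2) = A * ‖w‖ := by
        rw [← hww, hc]; field_simp
      simp only [inner_sub_left, real_inner_smul_left, ← hs, hwn]
      linarith [key, hcw]

lemma main_ineq {d : ℕ} (D : Set (Euc d)) (δ α : ℝ) (hδ : 0 < δ)
    (hα0 : 0 ≤ α) (hα1 : α < 1) (x : Euc d) (l : Euc d) (hl1 : ‖l‖ = 1)
    (hl : ∀ y ∈ Metric.ball x δ ∩ frontier D, cone y l α ∩ Metric.ball x δ ⊆ closure D)
    (y : Euc d) (hy : y ∈ Metric.ball x δ ∩ frontier D)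
    (n : Euc d) (hn : n ∈ normalCone D y) :
    Real.sqrt (1 - α ^ 2) ≤ ⟪l, n⟫ := by
  simp only [normalCone, mem_iUnion, normalSet, mem_setOf_eq] at hn
  obtain ⟨r, hr, hn1, hballD⟩ := hn
  by_contra hcon
  push_neg at hcon
  obtain ⟨v, hv1, hvl, hvn⟩ := exists_dir l n hl1 hn1 α hα0 hα1 hcon
  have hyx : dist y x < δ := Metric.mem_ball.mp hy.1
  set r' := min r ((δ - dist y x) / 2) with hr'
  have hr'pos : 0 < r' := lt_min hr (by linarith)
  have hr'le : r' ≤ r := min_le_left _ _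
  have hr'le2 : r' ≤ (δ - dist y x) / 2 := min_le_right _ _
  -- the smaller ball also misses D
  have hsub : Metric.ball (y - r' • n) r' ⊆ Metric.ball (y - r • n) r := by
    intro z hz
    rw [Metric.mem_ball] at hz ⊢
    have hd : dist (y - r' • n) (y - r • n) = r - r' := by
      rw [dist_eq_norm]
      have : (y - r' • n) - (y - r • n) = (r - r') • n := by
        module
      rw [this, norm_smul, hn1, mul_one, Real.norm_eq_abs,
        abs_of_nonneg (by linarith)]
    calc dist z (y - r • n) ≤ dist z (y - r' • n) + dist (y - r' • n) (y - r • n) :=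
          dist_triangle _ _ _
      _ < r' + (r - r') := by rw [hd]; linarith
      _ = r := by ring
  set c := ⟪v, n⟫ with hcdef
  set t := r' * (-c) with ht
  have htpos : 0 < t := mul_pos hr'pos (by linarith)
  have hcle : -c ≤ 1 := by
    have := abs_real_inner_le_norm v n
    rw [hv1, hn1] at this
    have := abs_le.mp this
    linarith [this.1]
  set z := y + t • v with hz
  have hzy : z - y = t • v := by rw [hz]; abel
  have hzb : z ∈ Metric.ball (y - r' • n) r' := by
    rw [Metric.mem_ball, dist_eq_norm]
    have he : z - (y - r' • n) = t • v + r' • n := by rw [hz]; module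
    have hnormsq : ‖t • v + r' • n‖ ^ 2 = t ^ 2 + 2 * (t * r' * c) + r' ^ 2 := by
      rw [norm_add_sq_real, norm_smul, norm_smul, hv1, hn1,
        real_inner_smul_left, real_inner_smul_right, ← hcdef,
        Real.norm_eq_abs, Real.norm_eq_abs, abs_of_pos htpos, abs_of_pos hr'pos]
      ring
    have hlt : ‖t • v + r' • n‖ ^ 2 < r' ^ 2 := by
      rw [hnormsq, ht]
      have hcne : c < 0 := hvn
      nlinarith
    rw [he]
    exact lt_of_pow_lt_pow_left₀ 2 hr'pos.le hlt
  have hzδ : z ∈ Metric.ball x δ := by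
    rw [Metric.mem_ball]
    have hzy' : dist z y = t := by
      rw [dist_eq_norm, hzy, norm_smul, hv1, mul_one, Real.norm_eq_abs,
        abs_of_pos htpos]
    calc dist z x ≤ dist z y + dist y x := dist_triangle _ _ _
      _ = t + dist y x := by rw [hzy']
      _ ≤ r' + dist y x := by
          have : t ≤ r' := by rw [ht]; nlinarith
          linarith
      _ < δ := by linarith
  have hzcone : z ∈ cone y l α := by
    show α * ‖z - y‖ ≤ ⟪z - y, l⟫
    rw [hzy, norm_smul, hv1, mul_one, Real.norm_eq_abs, abs_of_pos htpos,
      real_inner_smul_left]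
    nlinarith
  have hzcl : z ∈ closure D := hl y hy ⟨hzcone, hzδ⟩
  have hne : (Metric.ball (y - r' • n) r' ∩ D).Nonempty :=
    mem_closure_iff.mp hzcl _ Metric.isOpen_ball hzb
  obtain ⟨p, hp1, hp2⟩ := hne
  have : p ∈ Metric.ball (y - r • n) r ∩ D := ⟨hsub hp1, hp2⟩
  rw [hballD] at this
  exact this

/-- condition (B') with constants `δ > 0`, `0 ≤ α < 1` implies condition (B)
with the same `δ` and `β = (1 − α²)^{−1/2}`; moreover, for each boundary point `x`, any unit
vector `l` witnessing (B') at `x` also witnesses (B) at `x`. -/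
theorem stmt1 {d : ℕ} (D : Set (Euc d)) (hDopen : IsOpen D) (hDconn : IsConnected D)
    (δ α : ℝ) (hδ : 0 < δ) (hα0 : 0 ≤ α) (hα1 : α < 1)
    (hB' : CondB' D δ α) :
    CondB D δ ((1 - α ^ 2) ^ (-(1 / 2) : ℝ)) ∧
      ∀ x ∈ frontier D, ∀ l : Euc d, ‖l‖ = 1 →
        (∀ y ∈ Metric.ball x δ ∩ frontier D, cone y l α ∩ Metric.ball x δ ⊆ closure D) →
        ∀ y ∈ Metric.ball x δ ∩ frontier D, ∀ n ∈ normalCone D y,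
          1 / ((1 - α ^ 2) ^ (-(1 / 2) : ℝ)) ≤ ⟪l, n⟫ := by
  have hA2 : (0:ℝ) ≤ 1 - α ^ 2 := by nlinarith
  have hrw : 1 / ((1 - α ^ 2 : ℝ) ^ (-(1 / 2) : ℝ)) = Real.sqrt (1 - α ^ 2) := by
    rw [Real.rpow_neg hA2, one_div, inv_inv, ← Real.sqrt_eq_rpow]
  constructor
  · intro x hx
    obtain ⟨l, hl1, hl⟩ := hB' x hx
    exact ⟨l, hl1, fun y hy n hn =>
      hrw ▸ main_ineq D δ α hδ hα0 hα1 x l hl1 hl y hy n hn⟩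
  · intro x hx l hl1 hl y hy n hn
    rw [hrw]
    exact main_ineq D δ α hδ hα0 hα1 x l hl1 hl y hy n hn

end
end

section
/- Let D be a convex domain in ℝ^d, let x₀ ∈ D and R₀ > 0 be such that cl(B(x₀, R₀)) ⊆ D, and let R ≥ R₀ and D_R = D ∩ B(x₀, R). Then D_R satisfies condition (B') with δ = R₀/2 and α = R/√(R² + (R₀/2)²); moreover, for each x ∈ ∂D_R the unit vector l_x = (x₀ − x)/|x₀ − x| works, i.e. C(y, l_x, α) ∩ B(x, R₀/2) ⊆ cl(D_R) for every y ∈ B(x, R₀/2) ∩ ∂D_R. -/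
open MeasureTheory ProbabilityTheory Set RealInnerProductSpace

noncomputable section

set_option maxHeartbeats 1600000 in
/-- if `D` is a convex domain, `cl(B(x₀,R₀)) ⊆ D` with `R₀ > 0` and `R ≥ R₀`,
then `D_R = D ∩ B(x₀,R)` satisfies condition (B') with `δ = R₀/2` and
`α = R/√(R² + (R₀/2)²)`; moreover for each `x ∈ ∂D_R` the unit vector
`l_x = (x₀ − x)/|x₀ − x|` works. -/
theorem stmt5 {d : ℕ} (D : Set (Euc d)) (hDopen : IsOpen D) (hDne : D.Nonempty)
    (hDconv : Convex ℝ D) (x₀ : Euc d) (hx₀ : x₀ ∈ D) (R₀ R : ℝ) (hR₀ : 0 < R₀)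
    (hball : Metric.closedBall x₀ R₀ ⊆ D) (hR : R₀ ≤ R) :
    CondB' (D ∩ Metric.ball x₀ R) (R₀ / 2) (R / Real.sqrt (R ^ 2 + (R₀ / 2) ^ 2)) ∧
      ∀ x ∈ frontier (D ∩ Metric.ball x₀ R),
        ∀ y ∈ Metric.ball x (R₀ / 2) ∩ frontier (D ∩ Metric.ball x₀ R),
          cone y (‖x₀ - x‖⁻¹ • (x₀ - x)) (R / Real.sqrt (R ^ 2 + (R₀ / 2) ^ 2)) ∩
              Metric.ball x (R₀ / 2) ⊆
            closure (D ∩ Metric.ball x₀ R) := by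
  classical
  set δ := R₀ / 2 with hδdef
  have hδ : 0 < δ := by positivity
  have hRpos : 0 < R := lt_of_lt_of_le hR₀ hR
  set S := Real.sqrt (R ^ 2 + δ ^ 2) with hSdef
  have hS2 : S ^ 2 = R ^ 2 + δ ^ 2 := Real.sq_sqrt (by positivity)
  have hSpos : 0 < S := Real.sqrt_pos.2 (by positivity)
  have hRS : R ≤ S := by nlinarith only [hS2, hSpos, hRpos, hδ, sq_nonneg (S - R)]
  set α := R / S with hαdef
  have hαS : α * S = R := div_mul_cancel₀ _ hSpos.ne'
  have hαpos : 0 < α := div_pos hRpos hSpos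
  have hα1 : α < 1 := (div_lt_one hSpos).2 (by nlinarith only [hS2, hSpos, hRpos, hδ, hRS])
  have hαS2 : α ^ 2 * S ^ 2 = R ^ 2 := by linear_combination (α * S + R) * hαS
  have h1mα : (1 - α ^ 2) * S ^ 2 = δ ^ 2 := by linear_combination hS2 - hαS2
  set DR := D ∩ Metric.ball x₀ R with hDRdef
  have hDRopen : IsOpen DR := hDopen.inter Metric.isOpen_ball
  have hDRconv : Convex ℝ DR := hDconv.inter (convex_ball x₀ R)
  have hballDR : Metric.ball x₀ R₀ ⊆ DR := fun p hp =>
    ⟨hball (Metric.ball_subset_closedBall hp), Metric.ball_subset_ball hR hp⟩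
  have hclconv : Convex ℝ (closure DR) := hDRconv.closure
  have hfacts : ∀ p ∈ frontier DR, p ∈ closure DR ∧ R₀ ≤ dist p x₀ ∧ dist p x₀ ≤ R := by
    intro p hp
    have hpc : p ∈ closure DR := frontier_subset_closure hp
    have hpn : p ∉ DR := by rw [hDRopen.frontier_eq] at hp; exact hp.2
    refine ⟨hpc, ?_, ?_⟩
    · by_contra h
      push_neg at h
      exact hpn (hballDR (Metric.mem_ball.2 h))
    · have : closure DR ⊆ Metric.closedBall x₀ R := by
        rw [← closure_ball x₀ hRpos.ne']
        exact closure_mono (Set.inter_subset_right)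
      exact Metric.mem_closedBall.1 (this hpc)
  have main : ∀ x ∈ frontier DR, ∀ y ∈ Metric.ball x δ ∩ frontier DR,
      cone y (‖x₀ - x‖⁻¹ • (x₀ - x)) α ∩ Metric.ball x δ ⊆ closure DR := by
    rintro x hx y ⟨hyx, hyf⟩ z ⟨hzc, hzx⟩
    obtain ⟨hxc, hxR₀, hxR⟩ := hfacts x hx
    have hyc : y ∈ closure DR := frontier_subset_closure hyf
    by_cases hzy : z = y
    · exact hzy ▸ hyc
    simp only [cone, Set.mem_setOf_eq] at hzc
    set u := z - y with hu
    have hune : u ≠ 0 := sub_ne_zero.2 hzy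
    set ρ := ‖u‖ with hρ
    have hρpos : 0 < ρ := norm_pos_iff.2 hune
    set v := x₀ - x with hv
    set L := ‖v‖ with hL
    have hLdist : L = dist x x₀ := by rw [hL, hv, norm_sub_rev, ← dist_eq_norm]
    have hL0 : R₀ ≤ L := hLdist ▸ hxR₀
    have hLR : L ≤ R := hLdist ▸ hxR
    have hLpos : 0 < L := lt_of_lt_of_le hR₀ hL0
    have hL0' : 2 * δ ≤ L := by rw [hδdef]; linarith only [hL0]
    have hR2δ : 2 * δ ≤ R := by rw [hδdef]; linarith only [hR]
    rw [real_inner_smul_right] at hzc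
    have hinner : α * ρ * L ≤ ⟪u, v⟫ := by
      have h := mul_le_mul_of_nonneg_right hzc hLpos.le
      rw [mul_comm (L⁻¹ * _) L, ← mul_assoc, mul_inv_cancel₀ hLpos.ne', one_mul] at h
      exact h
    have hxy : ‖x - y‖ < δ := by
      rw [← dist_eq_norm, dist_comm]
      exact Metric.mem_ball.1 hyx
    have hρ2δ : ρ < 2 * δ := by
      have h1 : dist z x < δ := Metric.mem_ball.1 hzx
      have h2 := dist_triangle z x y
      have h3 : dist x y < δ := by rw [dist_eq_norm]; exact hxy
      have h4 : ρ = dist z y := (dist_eq_norm z y)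
      linarith only [h1, h2, h3, h4]
    suffices h : ∃ s : ℝ, 1 ≤ s ∧ ‖s • u - v‖ ≤ δ by
      obtain ⟨s, hs1, hsd⟩ := h
      have hspos : 0 < s := lt_of_lt_of_le one_pos hs1
      set w := y + s • u with hw
      have hwball : w ∈ Metric.ball x₀ R₀ := by
        rw [Metric.mem_ball, dist_eq_norm]
        have hid : w - x₀ = (s • u - v) - (x - y) := by rw [hw, hv]; abel
        rw [hid]
        calc ‖(s • u - v) - (x - y)‖ ≤ ‖s • u - v‖ + ‖x - y‖ := norm_sub_le _ _
          _ < δ + δ := by linarith only [hsd, hxy, hδ]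
          _ = R₀ := by rw [hδdef]; ring
      have hwc : w ∈ closure DR := subset_closure (hballDR hwball)
      have hz : z = (1 - s⁻¹) • y + s⁻¹ • w := by
        rw [hw, smul_add, smul_smul, inv_mul_cancel₀ hspos.ne', one_smul, hu]
        module
      rw [hz]
      refine hclconv hyc hwc ?_ ?_ (by ring)
      · rw [sub_nonneg]
        exact inv_le_one_of_one_le₀ hs1
      · positivity
    have norm_le_of_sq : ∀ a : Euc d, ‖a‖ ^ 2 ≤ δ ^ 2 → ‖a‖ ≤ δ := by
      intro a ha
      calc ‖a‖ = Real.sqrt (‖a‖ ^ 2) := (Real.sqrt_sq (norm_nonneg _)).symm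
        _ ≤ Real.sqrt (δ ^ 2) := Real.sqrt_le_sqrt ha
        _ = δ := Real.sqrt_sq hδ.le
    rcases le_or_gt ρ (L * α) with hcase | hcase
    · refine ⟨L * α / ρ, (one_le_div hρpos).2 hcase, ?_⟩
      set s := L * α / ρ with hs
      have hsρ : s * ρ = L * α := div_mul_cancel₀ _ hρpos.ne'
      have hs0 : 0 ≤ s := by positivity
      refine norm_le_of_sq _ ?_
      have hexp : ‖s • u - v‖ ^ 2 = s ^ 2 * ρ ^ 2 - 2 * (s * ⟪u, v⟫) + L ^ 2 := by
        rw [norm_sub_sq_real, real_inner_smul_left, norm_smul, Real.norm_eq_abs, mul_pow,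
          sq_abs]
      rw [hexp]
      have h1 : s * (α * ρ * L) ≤ s * ⟪u, v⟫ := mul_le_mul_of_nonneg_left hinner hs0
      have e1 : s ^ 2 * ρ ^ 2 = L ^ 2 * α ^ 2 := by
        linear_combination (s * ρ + L * α) * hsρ
      have e2 : s * (α * ρ * L) = L ^ 2 * α ^ 2 := by
        linear_combination (α * L) * hsρ
      have hLS : L ^ 2 ≤ S ^ 2 := by nlinarith only [hLR, hRS, hLpos]
      have hm : (L ^ 2 - L ^ 2 * α ^ 2) * S ^ 2 = L ^ 2 * δ ^ 2 := by
        linear_combination L ^ 2 * h1mα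
      have hfin : L ^ 2 - L ^ 2 * α ^ 2 ≤ δ ^ 2 := by
        have hmul : L ^ 2 * δ ^ 2 ≤ S ^ 2 * δ ^ 2 :=
          mul_le_mul_of_nonneg_right hLS (sq_nonneg δ)
        have h2 : (L ^ 2 - L ^ 2 * α ^ 2) * S ^ 2 ≤ δ ^ 2 * S ^ 2 := by
          rw [hm]; linarith only [hmul]
        exact le_of_mul_le_mul_right h2 (by positivity)
      linarith only [h1, e1, e2, hfin]
    · refine ⟨1, le_refl 1, ?_⟩
      refine norm_le_of_sq _ ?_
      rw [one_smul, norm_sub_sq_real]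
      -- goal: ρ ^ 2 - 2 * ⟪u, v⟫ + L ^ 2 ≤ δ ^ 2
      have hSR4 : 4 * (S - R) ≤ δ := by nlinarith only [hS2, hR2δ, hRS, hδ, hSpos, hRpos]
      have hsq16 : 16 * (S - R) ^ 2 ≤ δ ^ 2 := by nlinarith only [hSR4, sub_nonneg.2 hRS, hδ]
      have e1sq : (1 - α) ^ 2 * S ^ 2 = (S - R) ^ 2 := by
        have e1 : (1 - α) * S = S - R := by linear_combination -hαS
        linear_combination ((1 - α) * S + (S - R)) * e1
      have hkey : (4 * δ ^ 2 * (1 - α) ^ 2 + R ^ 2 * (1 - α ^ 2)) * S ^ 2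
          = 4 * δ ^ 2 * (S - R) ^ 2 + R ^ 2 * δ ^ 2 := by
        linear_combination 4 * δ ^ 2 * e1sq + R ^ 2 * h1mα
      have h16 : 4 * δ ^ 2 * (S - R) ^ 2 + R ^ 2 * δ ^ 2 ≤ δ ^ 2 * S ^ 2 := by
        nlinarith only [hsq16, hS2, sq_nonneg δ, sq_nonneg R, hδ]
      have hfinal : 4 * δ ^ 2 * (1 - α) ^ 2 + R ^ 2 * (1 - α ^ 2) ≤ δ ^ 2 := by
        have h2 : (4 * δ ^ 2 * (1 - α) ^ 2 + R ^ 2 * (1 - α ^ 2)) * S ^ 2 ≤ δ ^ 2 * S ^ 2 := by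
          rw [hkey]; exact h16
        exact le_of_mul_le_mul_right h2 (by positivity)
      have hLα : 2 * δ * α ≤ L * α := mul_le_mul_of_nonneg_right hL0' hαpos.le
      have f1 : (0:ℝ) ≤ 2 * δ - ρ + (L * α - 2 * δ * α) := by linarith only [hρ2δ, hLα]
      have f2 : (0:ℝ) ≤ 2 * δ - 2 * δ * α + (ρ - L * α) := by nlinarith only [hδ, hα1, hcase]
      have hb1 : (ρ - L * α) ^ 2 ≤ (2 * δ - 2 * δ * α) ^ 2 := by
        nlinarith only [mul_nonneg f1 f2]
      have hb2 : L ^ 2 * (1 - α ^ 2) ≤ R ^ 2 * (1 - α ^ 2) := by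
        have h0 : (0:ℝ) ≤ 1 - α ^ 2 := by nlinarith only [hα1, hαpos]
        have hRL2 : (0:ℝ) ≤ R ^ 2 - L ^ 2 := by nlinarith only [hLR, hLpos]
        nlinarith only [mul_nonneg h0 hRL2]
      nlinarith only [hinner, hb1, hb2, hfinal]
  constructor
  · intro x hx
    refine ⟨‖x₀ - x‖⁻¹ • (x₀ - x), ?_, main x hx⟩
    have hne : ‖x₀ - x‖ ≠ 0 := by
      obtain ⟨_, hxR₀, _⟩ := hfacts x hx
      have : (0:ℝ) < dist x x₀ := lt_of_lt_of_le hR₀ hxR₀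
      rw [norm_sub_rev, ← dist_eq_norm]
      exact this.ne'
    rw [norm_smul, norm_inv, norm_norm, inv_mul_cancel₀ hne]
  · exact main

end
end

section
/- Let D be a convex domain in ℝ^d, x₀ ∈ D, R₀ > 0 with cl(B(x₀, R₀)) ⊆ D. Let q ≥ 1, let ω be a control function, and let w : [0,T] → ℝ^d be a continuous path with w(0) ∈ cl(D) satisfying |w(t) − w(s)| ≤ ω(s,t)^{1/q} for all 0 ≤ s ≤ t ≤ T. If (ξ, φ) solves the Skorohod problem for w on D, then, with M = max_{0 ≤ t ≤ T} |ξ(t) − x₀|, for all 0 ≤ s ≤ t ≤ T: ‖φ‖_{[s,t]} ≤ 10 [ {16 R₀^{−1} (1 + 4 R₀^{−2} M²)^{1/2} + 1}^q ω(s,t) + 1 ] (1 + 4 R₀^{−2} M²) ‖w‖_{∞,[s,t]}. -/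
open MeasureTheory ProbabilityTheory Set RealInnerProductSpace

noncomputable section

/-- `(ξ, φ)` solves the Skorohod problem for `w` on `D` over `[0,T]`, with representing
finite measure `μ` and direction function `nv`: `ξ` stays in `cl(D)`, `ξ = w + φ`,
`φ(t) = ∫_{[0,t]} nv dμ`, `‖φ‖_{[0,t]} = μ([0,t])`, `μ` is carried by the times where
`ξ` is on the boundary, and `nv(s) ∈ N_{ξ(s)}` for `μ`-a.e. `s`. -/
structure IsSkorohodSolution {d : ℕ} (D : Set (Euc d)) (T : ℝ) (w ξ φ : ℝ → Euc d)
    (μ : Measure ℝ) (nv : ℝ → Euc d) : Prop where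
  cont_ξ : ContinuousOn ξ (Icc 0 T)
  cont_φ : ContinuousOn φ (Icc 0 T)
  mem : ∀ t ∈ Icc 0 T, ξ t ∈ closure D
  init : ξ 0 = w 0
  decomp : ∀ t ∈ Icc 0 T, ξ t = w t + φ t
  φ_zero : φ 0 = 0
  finite : IsFiniteMeasure μ
  carrier : μ (Icc 0 T)ᶜ = 0
  meas_nv : Measurable nv
  repr : ∀ t ∈ Icc 0 T, φ t = ∫ s in Icc 0 t, nv s ∂μ
  total_var : ∀ t ∈ Icc 0 T, eVariationOn φ (Icc 0 t) = μ (Icc 0 t)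
  bdry : μ {s | ξ s ∉ frontier D} = 0
  normal : ∀ᵐ s ∂μ, nv s ∈ normalCone D (ξ s)

/-- `‖w‖_{∞,[s,t]} = max_{s ≤ u ≤ v ≤ t} |w(u) − w(v)|`. -/
def supOsc {d : ℕ} (w : ℝ → Euc d) (s t : ℝ) : ℝ :=
  ⨆ p : Icc s t × Icc s t, ‖w p.1.1 - w p.2.1‖

/-- Total variation `‖φ‖_{[s,t]}` as a real number. -/
def totalVar {d : ℕ} (φ : ℝ → Euc d) (s t : ℝ) : ℝ :=
  (eVariationOn φ (Icc s t)).toReal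

/-- A control function on the simplex over `[0,T]`. -/
structure IsControl (T : ℝ) (ω : ℝ → ℝ → ℝ) : Prop where
  nonneg : ∀ s t, 0 ≤ s → s ≤ t → t ≤ T → 0 ≤ ω s t
  cont : ContinuousOn (fun p : ℝ × ℝ => ω p.1 p.2) {p | 0 ≤ p.1 ∧ p.1 ≤ p.2 ∧ p.2 ≤ T}
  superadd : ∀ s u t, 0 ≤ s → s ≤ u → u ≤ t → t ≤ T → ω s u + ω u t ≤ ω s t

lemma norm_of_normalCone {d : ℕ} {D : Set (Euc d)} {x n : Euc d}
    (h : n ∈ normalCone D x) : ‖n‖ = 1 := by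
  simp only [normalCone, mem_iUnion] at h
  obtain ⟨r, hr, hn, _⟩ := h
  exact hn

lemma inner_nonneg_of_normalCone {d : ℕ} {D : Set (Euc d)} (hconv : Convex ℝ D)
    {x n y : Euc d} (hx : x ∈ closure D) (hn : n ∈ normalCone D x) (hy : y ∈ closure D) :
    0 ≤ ⟪n, y - x⟫ := by
  simp only [normalCone, mem_iUnion] at hn
  obtain ⟨r, hr, hn1, hdisj⟩ := hn
  by_contra hlt
  push_neg at hlt
  set v : Euc d := y - x with hv
  set ε : ℝ := -⟪n, v⟫ with hε
  have hε0 : 0 < ε := by rw [hε]; linarith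
  set lam : ℝ := min 1 (r * ε / (‖v‖ ^ 2 + 1)) with hlam
  have hvpos : (0:ℝ) < ‖v‖ ^ 2 + 1 := by positivity
  have hlam0 : 0 < lam := lt_min one_pos (by positivity)
  have hlam1 : lam ≤ 1 := min_le_left _ _
  have hz : x + lam • v ∈ closure D := by
    have := hconv.closure hx hy (by linarith : (0:ℝ) ≤ 1 - lam) hlam0.le (by ring)
    convert this using 1
    rw [hv]
    module
  have hzball : x + lam • v ∈ Metric.ball (x - r • n) r := by
    rw [Metric.mem_ball, dist_eq_norm]
    have hexp : x + lam • v - (x - r • n) = lam • v + r • n := by module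
    rw [hexp]
    have hvn : ⟪v, n⟫ = -ε := by rw [real_inner_comm, hε]; ring
    have hsq : ‖lam • v + r • n‖ ^ 2 = lam ^ 2 * ‖v‖ ^ 2 - 2 * lam * r * ε + r ^ 2 := by
      rw [norm_add_sq_real, real_inner_smul_left, real_inner_smul_right, hvn, norm_smul,
        norm_smul, hn1]
      rw [Real.norm_eq_abs, Real.norm_eq_abs, abs_of_pos hlam0, abs_of_pos hr]
      ring
    have hkey : lam * ‖v‖ ^ 2 < 2 * r * ε := by
      have h1 : lam ≤ r * ε / (‖v‖ ^ 2 + 1) := min_le_right _ _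
      have h2 : lam * (‖v‖ ^ 2 + 1) ≤ r * ε := (le_div_iff₀ hvpos).1 h1
      nlinarith
    have : ‖lam • v + r • n‖ ^ 2 < r ^ 2 := by nlinarith
    have hnn : 0 ≤ ‖lam • v + r • n‖ := norm_nonneg _
    nlinarith
  have hD : closure D ∩ Metric.ball (x - r • n) r = ∅ := by
    have : D ⊆ (Metric.ball (x - r • n) r)ᶜ := by
      intro z hz
      intro hzb
      exact absurd (mem_inter hzb hz) (by simp [hdisj])
    have hcl : closure D ⊆ (Metric.ball (x - r • n) r)ᶜ :=
      closure_minimal this (isClosed_compl_iff.2 Metric.isOpen_ball)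
    ext z; simp only [mem_inter_iff, mem_empty_iff_false, iff_false, not_and]
    intro h1 h2; exact hcl h1 h2
  have : x + lam • v ∈ (∅ : Set (Euc d)) := by
    rw [← hD]; exact ⟨hz, hzball⟩
  exact this
lemma supOsc_nonneg {d : ℕ} (w : ℝ → Euc d) (s t : ℝ) : 0 ≤ supOsc w s t :=
  Real.iSup_nonneg fun _ => norm_nonneg _

lemma norm_sub_le_supOsc {d : ℕ} {T : ℝ} {w : ℝ → Euc d} (hw : ContinuousOn w (Icc 0 T))
    {s t u v : ℝ} (hs : 0 ≤ s) (ht : t ≤ T) (hu : u ∈ Icc s t) (hv : v ∈ Icc s t) :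
    ‖w u - w v‖ ≤ supOsc w s t := by
  obtain ⟨C, hC⟩ := isCompact_Icc.exists_bound_of_continuousOn hw
  have hsub : Icc s t ⊆ Icc 0 T := Icc_subset_Icc hs ht
  have hbdd : BddAbove (Set.range fun p : Icc s t × Icc s t => ‖w p.1.1 - w p.2.1‖) := by
    refine ⟨2 * C, ?_⟩
    rintro x ⟨p, rfl⟩
    calc ‖w p.1.1 - w p.2.1‖ ≤ ‖w p.1.1‖ + ‖w p.2.1‖ := norm_sub_le _ _
      _ ≤ 2 * C := by
        have h1 := hC _ (hsub p.1.2); have h2 := hC _ (hsub p.2.2); linarith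
  exact le_ciSup hbdd (⟨⟨u, hu⟩, ⟨v, hv⟩⟩ : Icc s t × Icc s t)

lemma supOsc_mono {d : ℕ} {T : ℝ} {w : ℝ → Euc d} (hw : ContinuousOn w (Icc 0 T))
    {s t a b : ℝ} (hs : 0 ≤ s) (ht : t ≤ T) (h1 : s ≤ a) (h2 : b ≤ t) :
    supOsc w a b ≤ supOsc w s t := by
  refine Real.iSup_le (fun p => ?_) (supOsc_nonneg w s t)
  exact norm_sub_le_supOsc hw hs ht
    ⟨h1.trans p.1.2.1, p.1.2.2.trans h2⟩ ⟨h1.trans p.2.2.1, p.2.2.2.trans h2⟩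

lemma omega_self {T : ℝ} {ωc : ℝ → ℝ → ℝ} (hωc : IsControl T ωc) {a : ℝ}
    (ha : 0 ≤ a) (haT : a ≤ T) : ωc a a = 0 :=
  le_antisymm (by have := hωc.superadd a a a ha le_rfl le_rfl haT; linarith)
    (hωc.nonneg a a ha le_rfl haT)

lemma omega_mono {T : ℝ} {ωc : ℝ → ℝ → ℝ} (hωc : IsControl T ωc) {a u v b : ℝ}
    (ha : 0 ≤ a) (h1 : a ≤ u) (h2 : u ≤ v) (h3 : v ≤ b) (h4 : b ≤ T) :
    ωc u v ≤ ωc a b := by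
  have k1 := hωc.superadd a u v ha h1 h2 (h3.trans h4)
  have k2 := hωc.superadd a v b ha (h1.trans h2) h3 h4
  have k3 := hωc.nonneg a u ha h1 ((h2.trans h3).trans h4)
  have k4 := hωc.nonneg v b (ha.trans (h1.trans h2)) h3 h4
  linarith

lemma supOsc_le_rpow {d : ℕ} {T q : ℝ} {w : ℝ → Euc d} {ωc : ℝ → ℝ → ℝ}
    (hωc : IsControl T ωc) (hq : 1 ≤ q)
    (hwq : ∀ s t, 0 ≤ s → s ≤ t → t ≤ T → ‖w t - w s‖ ≤ ωc s t ^ (1 / q))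
    {a b : ℝ} (ha : 0 ≤ a) (hab : a ≤ b) (hbT : b ≤ T) :
    supOsc w a b ≤ ωc a b ^ (1 / q) := by
  have hq0 : (0:ℝ) ≤ 1 / q := by positivity
  have hrpow_nonneg : (0:ℝ) ≤ ωc a b ^ (1 / q) :=
    Real.rpow_nonneg (hωc.nonneg a b ha hab hbT) _
  refine Real.iSup_le (fun p => ?_) hrpow_nonneg
  obtain ⟨⟨u, hu⟩, ⟨v, hv⟩⟩ := p
  have key : ∀ x y : ℝ, x ∈ Icc a b → y ∈ Icc a b → x ≤ y → ‖w y - w x‖ ≤ ωc a b ^ (1 / q) := by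
    intro x y hx hy hxy
    calc ‖w y - w x‖ ≤ ωc x y ^ (1 / q) :=
          hwq x y (ha.trans hx.1) hxy (hy.2.trans hbT)
      _ ≤ ωc a b ^ (1 / q) :=
          Real.rpow_le_rpow (hωc.nonneg x y (ha.trans hx.1) hxy (hy.2.trans hbT))
            (omega_mono hωc ha hx.1 hxy hy.2 hbT) hq0
  rcases le_total u v with h | h
  · simpa [norm_sub_rev] using key u v hu hv h
  · exact key v u hv hu h

set_option maxHeartbeats 2000000 in
lemma key_estimate {d : ℕ} {D : Set (Euc d)} (hDconv : Convex ℝ D)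
    {x₀ : Euc d} {R₀ : ℝ} (hR₀ : 0 < R₀) (hball : Metric.closedBall x₀ R₀ ⊆ D)
    {T : ℝ} {w ξ φ : ℝ → Euc d} {μ : Measure ℝ} {nv : ℝ → Euc d}
    (hw : ContinuousOn w (Icc 0 T))
    (hsol : IsSkorohodSolution D T w ξ φ μ nv)
    {M : ℝ} (hMle : ∀ u ∈ Icc (0:ℝ) T, ‖ξ u - x₀‖ ≤ M)
    {a b : ℝ} (ha : 0 ≤ a) (hab : a ≤ b) (hbT : b ≤ T)
    (hosc : supOsc w a b ≤ R₀ / 2) :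
    (μ (Ioc a b)).toReal ≤ 8 * M ^ 2 / R₀ ^ 2 * supOsc w a b := by
  haveI : IsFiniteMeasure μ := hsol.finite
  set o : ℝ := supOsc w a b with ho
  set Q : Set ℝ := Ioc a b with hQ
  set κ : Measure ℝ := μ.restrict Q with hκ
  set ν : ℝ := (μ Q).toReal with hν
  have hQm : MeasurableSet Q := measurableSet_Ioc
  have hQsub : Q ⊆ Icc 0 T := fun u hu => ⟨ha.trans hu.1.le, hu.2.trans hbT⟩
  have haT : a ∈ Icc (0:ℝ) T := ⟨ha, hab.trans hbT⟩
  have ho0 : 0 ≤ o := supOsc_nonneg w a b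
  have hν0 : 0 ≤ ν := ENNReal.toReal_nonneg
  have hM0 : 0 ≤ M := (norm_nonneg _).trans (hMle a haT)
  -- a.e. facts
  have hae1 : ∀ᵐ u ∂μ, u ∈ Icc 0 T := by
    rw [ae_iff]
    convert hsol.carrier using 2
    rfl
  have h_nv_norm : ∀ᵐ u ∂μ, ‖nv u‖ = 1 := hsol.normal.mono fun u hu => norm_of_normalCone hu
  have h_nv_normκ : ∀ᵐ u ∂κ, ‖nv u‖ = 1 := ae_restrict_of_ae h_nv_norm
  have h_memQ : ∀ᵐ u ∂κ, u ∈ Q := ae_restrict_mem hQm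
  -- integrability of nv on any set
  have h_int_on : ∀ S : Set ℝ, IntegrableOn nv S μ := by
    intro S
    exact Integrable.mono' (integrable_const 1) hsol.meas_nv.aestronglyMeasurable
      (ae_restrict_of_ae (h_nv_norm.mono fun u h => le_of_eq h))
  -- increments of φ
  have hφdiff : ∀ u, a ≤ u → u ≤ T → φ u - φ a = ∫ v in Ioc a u, nv v ∂μ := by
    intro u hau huT
    have hdisj : Disjoint (Icc 0 a) (Ioc a u) := by
      rw [Set.disjoint_left]
      intro x hx1 hx2
      exact absurd hx1.2 (not_le.2 hx2.1)
    have hun : Icc 0 a ∪ Ioc a u = Icc 0 u := Icc_union_Ioc_eq_Icc ha hau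
    rw [hsol.repr u ⟨ha.trans hau, huT⟩, hsol.repr a haT, ← hun,
      setIntegral_union hdisj measurableSet_Ioc (h_int_on _) (h_int_on _)]
    abel
  set Δ : Euc d := φ b - φ a with hΔdef
  have hΔ : Δ = ∫ v, nv v ∂κ := hφdiff b hab hbT
  -- bound for increments of φ
  have hψ_bound : ∀ u ∈ Q, ‖φ u - φ a‖ ≤ ν := by
    intro u hu
    rw [hφdiff u hu.1.le (hu.2.trans hbT)]
    calc ‖∫ v in Ioc a u, nv v ∂μ‖ ≤ ∫ v in Ioc a u, ‖nv v‖ ∂μ := norm_integral_le_integral_norm _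
      _ = ∫ v in Ioc a u, (1:ℝ) ∂μ :=
          integral_congr_ae (ae_restrict_of_ae (h_nv_norm.mono fun v h => by simp only []; rw [h]))
      _ = (μ (Ioc a u)).toReal := by simp [measureReal_def]
      _ ≤ ν := ENNReal.toReal_mono (measure_ne_top μ Q)
          (measure_mono (Ioc_subset_Ioc_right hu.2))
  -- pointwise a.e. inequalities from the normal cone structure
  have hmain_ae : ∀ᵐ u ∂μ, u ∈ Icc 0 T → (R₀ ≤ ⟪nv u, x₀ - ξ u⟫ ∧ ⟪nv u, ξ u - ξ a⟫ ≤ 0) := by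
    filter_upwards [hsol.normal] with u hu huT
    have hξu : ξ u ∈ closure D := hsol.mem u huT
    have hnn : ‖nv u‖ = 1 := norm_of_normalCone hu
    constructor
    · have hy : x₀ - R₀ • nv u ∈ closure D := by
        apply subset_closure
        apply hball
        rw [Metric.mem_closedBall, dist_eq_norm]
        simp only [sub_sub_cancel_left, norm_neg, norm_smul, hnn, Real.norm_eq_abs,
          abs_of_pos hR₀, mul_one]
        exact le_rfl
      have h0 := inner_nonneg_of_normalCone hDconv hξu hu hy
      have hexp : (x₀ - R₀ • nv u) - ξ u = (x₀ - ξ u) - R₀ • nv u := by module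
      rw [hexp, inner_sub_right, real_inner_smul_right, real_inner_self_eq_norm_sq, hnn] at h0
      linarith
    · have h0 := inner_nonneg_of_normalCone hDconv hξu hu (hsol.mem a haT)
      have : ⟪nv u, ξ u - ξ a⟫ = -⟪nv u, ξ a - ξ u⟫ := by
        rw [← inner_neg_right]; congr 1; module
      rw [this]; linarith
  have hmainκ : ∀ᵐ u ∂κ, R₀ ≤ ⟪nv u, x₀ - ξ u⟫ ∧ ⟪nv u, ξ u - ξ a⟫ ≤ 0 := by
    filter_upwards [ae_restrict_of_ae (hmain_ae.mp (hae1.mono fun u h1 h2 => h2 h1))] with u hu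
    exact hu
  -- measurability of the basic functions on Q
  have h_ξ_aem : AEMeasurable ξ κ := (hsol.cont_ξ.mono hQsub).aemeasurable hQm
  have h_φ_aem : AEMeasurable φ κ := (hsol.cont_φ.mono hQsub).aemeasurable hQm
  have h_w_aem : AEMeasurable w κ := (hw.mono hQsub).aemeasurable hQm
  have h_nv_aem : AEMeasurable nv κ := hsol.meas_nv.aemeasurable
  -- the relevant real-valued integrands and their integrability
  set f1 : ℝ → ℝ := fun u => ⟪nv u, x₀ - ξ u⟫ with hf1
  set fC : ℝ → ℝ := fun u => ⟪nv u, x₀ - ξ a⟫ with hfC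
  set f2 : ℝ → ℝ := fun u => ⟪nv u, w a - w u⟫ with hf2
  set fI : ℝ → ℝ := fun u => ⟪nv u, φ u - φ a⟫ with hfI
  have hint1 : Integrable f1 κ := by
    refine Integrable.mono' (integrable_const M) ?_ ?_
    · exact (h_nv_aem.inner (aemeasurable_const.sub h_ξ_aem)).aestronglyMeasurable
    · filter_upwards [h_nv_normκ, ae_restrict_of_ae hae1] with u h1 h2
      rw [Real.norm_eq_abs]
      calc |⟪nv u, x₀ - ξ u⟫| ≤ ‖nv u‖ * ‖x₀ - ξ u‖ := abs_real_inner_le_norm _ _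
        _ ≤ M := by rw [h1, one_mul, norm_sub_rev]; exact hMle u h2
  have hintC : Integrable fC κ := by
    refine Integrable.mono' (integrable_const M) ?_ ?_
    · exact (h_nv_aem.inner aemeasurable_const).aestronglyMeasurable
    · filter_upwards [h_nv_normκ] with u h1
      rw [Real.norm_eq_abs]
      calc |⟪nv u, x₀ - ξ a⟫| ≤ ‖nv u‖ * ‖x₀ - ξ a‖ := abs_real_inner_le_norm _ _
        _ ≤ M := by rw [h1, one_mul, norm_sub_rev]; exact hMle a haT
  have hint2 : Integrable f2 κ := by
    refine Integrable.mono' (integrable_const o) ?_ ?_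
    · exact (h_nv_aem.inner (aemeasurable_const.sub h_w_aem)).aestronglyMeasurable
    · filter_upwards [h_nv_normκ, h_memQ] with u h1 h2
      rw [Real.norm_eq_abs]
      calc |⟪nv u, w a - w u⟫| ≤ ‖nv u‖ * ‖w a - w u‖ := abs_real_inner_le_norm _ _
        _ ≤ o := by
            rw [h1, one_mul]
            exact norm_sub_le_supOsc hw ha hbT ⟨le_rfl, hab⟩ ⟨h2.1.le, h2.2⟩
  have hintI : Integrable fI κ := by
    refine Integrable.mono' (integrable_const ν) ?_ ?_
    · exact (h_nv_aem.inner (h_φ_aem.sub aemeasurable_const)).aestronglyMeasurable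
    · filter_upwards [h_nv_normκ, h_memQ] with u h1 h2
      rw [Real.norm_eq_abs]
      calc |⟪nv u, φ u - φ a⟫| ≤ ‖nv u‖ * ‖φ u - φ a‖ := abs_real_inner_le_norm _ _
        _ ≤ ν := by rw [h1, one_mul]; exact hψ_bound u h2
  -- the single-integral identities and estimates
  have hconst : ∀ c : ℝ, ∫ _ : ℝ, c ∂κ = ν * c := by
    intro c
    rw [integral_const]
    simp [hκ, hν, Measure.restrict_apply_univ, smul_eq_mul, measureReal_def]
  have hA_ge : R₀ * ν ≤ ∫ u, f1 u ∂κ := by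
    have := integral_mono_ae (integrable_const R₀) hint1
      (hmainκ.mono fun u hu => hu.1)
    rw [hconst R₀] at this
    linarith [this]
  have hdecompQ : ∀ u ∈ Q, f1 u = fC u + f2 u - fI u := by
    intro u hu
    have h1 : ξ u = w u + φ u := hsol.decomp u (hQsub hu)
    have h2 : ξ a = w a + φ a := hsol.decomp a haT
    have : x₀ - ξ u = (x₀ - ξ a) + (w a - w u) - (φ u - φ a) := by
      rw [h1, h2]; module
    simp only [hf1, hfC, hf2, hfI]
    rw [this, inner_sub_right, inner_add_right]
  have hA_eq : ∫ u, f1 u ∂κ = (∫ u, fC u ∂κ) + (∫ u, f2 u ∂κ) - ∫ u, fI u ∂κ := by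
    have hsum : ∫ u, (fC u + f2 u - fI u) ∂κ
        = (∫ u, fC u ∂κ) + (∫ u, f2 u ∂κ) - ∫ u, fI u ∂κ := by
      rw [integral_sub (f := fun u => fC u + f2 u) (hintC.add hint2) hintI, integral_add hintC hint2]
    rw [← hsum]
    refine integral_congr_ae ?_
    filter_upwards [h_memQ] with u hu
    simpa using hdecompQ u hu
  have hC_le : ∫ u, fC u ∂κ ≤ M * ‖Δ‖ := by
    have : ∫ u, fC u ∂κ = ⟪x₀ - ξ a, Δ⟫ := by
      rw [hΔ, ← integral_inner (h_int_on Q)]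
      exact integral_congr_ae (Filter.Eventually.of_forall fun u => real_inner_comm _ _)
    rw [this]
    calc ⟪x₀ - ξ a, Δ⟫ ≤ ‖x₀ - ξ a‖ * ‖Δ‖ := real_inner_le_norm _ _
      _ ≤ M * ‖Δ‖ := by
          apply mul_le_mul_of_nonneg_right _ (norm_nonneg _)
          rw [norm_sub_rev]; exact hMle a haT
  have hX_le : ∫ u, f2 u ∂κ ≤ o * ν := by
    have := integral_mono_ae hint2 (integrable_const o)
      ((h_nv_normκ.and h_memQ).mono fun u ⟨h1, h2⟩ => by
        calc f2 u ≤ |⟪nv u, w a - w u⟫| := le_abs_self _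
          _ ≤ ‖nv u‖ * ‖w a - w u‖ := abs_real_inner_le_norm _ _
          _ ≤ o := by
              rw [h1, one_mul]
              exact norm_sub_le_supOsc hw ha hbT ⟨le_rfl, hab⟩ ⟨h2.1.le, h2.2⟩)
    rw [hconst o] at this
    linarith
  have hI_le_X : ∫ u, fI u ∂κ ≤ ∫ u, f2 u ∂κ := by
    refine integral_mono_ae hintI hint2 ?_
    filter_upwards [hmainκ, h_memQ] with u hu h2
    have h1 : ξ u = w u + φ u := hsol.decomp u (hQsub h2)
    have hξa : ξ a = w a + φ a := hsol.decomp a haT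
    have hsplit : φ u - φ a = (ξ u - ξ a) + (w a - w u) := by rw [h1, hξa]; module
    have : fI u = ⟪nv u, ξ u - ξ a⟫ + f2 u := by
      simp only [hfI, hf2, hsplit, inner_add_right]
    rw [this]
    linarith [hu.2]
  -- Fubini symmetrization: ‖Δ‖² ≤ 2 I
  set G : ℝ × ℝ → ℝ := fun p => ⟪nv p.1, nv p.2⟫ with hG
  have hGmeas : Measurable G :=
    (hsol.meas_nv.comp measurable_fst).inner (hsol.meas_nv.comp measurable_snd)
  set L : Set (ℝ × ℝ) := {p | p.2 ≤ p.1} with hL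
  set L' : Set (ℝ × ℝ) := {p | p.1 ≤ p.2} with hL'
  have hLm : MeasurableSet L := measurableSet_le measurable_snd measurable_fst
  have hL'm : MeasurableSet L' := measurableSet_le measurable_fst measurable_snd
  set F : ℝ × ℝ → ℝ := L.indicator G with hF
  set F' : ℝ × ℝ → ℝ := L'.indicator G with hF'
  set π : Measure (ℝ × ℝ) := κ.prod κ with hπ
  have hS : ∀ᵐ p ∂π, ‖nv p.1‖ = 1 ∧ ‖nv p.2‖ = 1 := by
    set S : Set ℝ := {u | ‖nv u‖ = 1} with hSdef
    have hSm : MeasurableSet S := hsol.meas_nv.norm (measurableSet_singleton 1)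
    have hSc : κ Sᶜ = 0 := by
      have := h_nv_normκ
      rw [ae_iff] at this
      convert this using 2
      rfl
    have hsub : (S ×ˢ S)ᶜ ⊆ (Sᶜ ×ˢ (univ : Set ℝ)) ∪ ((univ : Set ℝ) ×ˢ Sᶜ) := by
      intro p hp
      rw [Set.mem_compl_iff, Set.mem_prod] at hp
      push_neg at hp
      by_cases h : p.1 ∈ S
      · right; exact ⟨trivial, hp h⟩
      · left; exact ⟨h, trivial⟩
    have hππ : π ((S ×ˢ S)ᶜ) = 0 := by
      refine le_antisymm ?_ zero_le
      calc π ((S ×ˢ S)ᶜ) ≤ π ((Sᶜ ×ˢ (univ : Set ℝ)) ∪ ((univ : Set ℝ) ×ˢ Sᶜ)) :=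
            measure_mono hsub
        _ ≤ π (Sᶜ ×ˢ (univ : Set ℝ)) + π ((univ : Set ℝ) ×ˢ Sᶜ) := measure_union_le _ _
        _ = 0 := by rw [hπ, Measure.prod_prod, Measure.prod_prod, hSc]; simp
    have : ∀ᵐ p ∂π, p ∈ S ×ˢ S := by
      rw [ae_iff]
      exact measure_mono_null (fun p hp => by simpa using hp) hππ
    exact this.mono fun p hp => ⟨hp.1, hp.2⟩
  have hGb : ∀ᵐ p ∂π, ‖G p‖ ≤ 1 := by
    filter_upwards [hS] with p hp
    rw [Real.norm_eq_abs]
    calc |G p| ≤ ‖nv p.1‖ * ‖nv p.2‖ := abs_real_inner_le_norm _ _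
      _ = 1 := by rw [hp.1, hp.2, one_mul]
  have hintG : Integrable G π :=
    Integrable.mono' (integrable_const 1) hGmeas.aestronglyMeasurable hGb
  have habs_ind : ∀ (X : Set (ℝ × ℝ)) (p : ℝ × ℝ), ‖X.indicator G p‖ ≤ ‖G p‖ := by
    intro X p
    by_cases hp : p ∈ X
    · rw [Set.indicator_of_mem hp]
    · rw [Set.indicator_of_notMem hp]; simp [norm_nonneg]
  have hintF : Integrable F π :=
    Integrable.mono' (integrable_const 1) (hGmeas.indicator hLm).aestronglyMeasurable
      (hGb.mono fun p h => (habs_ind L p).trans h)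
  have hintF' : Integrable F' π :=
    Integrable.mono' (integrable_const 1) (hGmeas.indicator hL'm).aestronglyMeasurable
      (hGb.mono fun p h => (habs_ind L' p).trans h)
  have myfub : ∀ (H : ℝ × ℝ → ℝ), Integrable H π →
      ∫ u, (∫ v, H (u, v) ∂κ) ∂κ = ∫ p, H p ∂π := by
    intro H hH
    exact integral_integral (f := fun u v => H (u, v)) hH
  have hFslice : ∀ᵐ u ∂κ, (∫ v, F (u, v) ∂κ) = fI u := by
    filter_upwards [h_memQ] with u hu
    have h1 : ∀ v, F (u, v) = (Iic u).indicator (fun v => ⟪nv u, nv v⟫) v := by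
      intro v
      by_cases hv : v ≤ u
      · rw [hF, Set.indicator_of_mem (by exact hv), Set.indicator_of_mem (by exact hv)]
      · rw [hF, Set.indicator_of_notMem (by exact hv), Set.indicator_of_notMem (by exact hv)]
    have hQint : Q ∩ Iic u = Ioc a u := by
      rw [hQ, Ioc_inter_Iic, min_eq_right hu.2]
    calc (∫ v, F (u, v) ∂κ) = ∫ v in Q, (Iic u).indicator (fun v => ⟪nv u, nv v⟫) v ∂μ := by
          rw [hκ]; exact integral_congr_ae (.of_forall h1)
      _ = ∫ v in Q ∩ Iic u, ⟪nv u, nv v⟫ ∂μ := setIntegral_indicator measurableSet_Iic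
      _ = ∫ v in Ioc a u, ⟪nv u, nv v⟫ ∂μ := by rw [hQint]
      _ = fI u := by
          rw [hfI]
          simp only []
          rw [hφdiff u hu.1.le (hu.2.trans hbT), integral_inner (h_int_on _)]
  have hI_eq : ∫ u, fI u ∂κ = ∫ p, F p ∂π := by
    calc ∫ u, fI u ∂κ = ∫ u, (∫ v, F (u, v) ∂κ) ∂κ := (integral_congr_ae hFslice).symm
      _ = ∫ p, F p ∂π := myfub F hintF
  have hF'swap : ∀ p : ℝ × ℝ, F' (Prod.swap p) = F p := by
    intro p
    by_cases hp : p.2 ≤ p.1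
    · rw [hF', hF, Set.indicator_of_mem (by exact hp), Set.indicator_of_mem (by exact hp)]
      exact real_inner_comm _ _
    · rw [hF', hF, Set.indicator_of_notMem (by exact hp),
        Set.indicator_of_notMem (by exact hp)]
  have hI'_eq : ∫ p, F' p ∂π = ∫ p, F p ∂π := by
    calc ∫ p, F' p ∂π = ∫ p, F' p ∂(Measure.map Prod.swap π) := by
          rw [hπ, Measure.prod_swap]
      _ = ∫ p, F' (Prod.swap p) ∂π :=
          integral_map measurable_swap.aemeasurable
            (hGmeas.indicator hL'm).aestronglyMeasurable
      _ = ∫ p, F p ∂π := integral_congr_ae (.of_forall hF'swap)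
  have hFF'G : ∀ p, G p ≤ F p + F' p := by
    intro p
    by_cases h1 : p ∈ L
    · by_cases h2 : p ∈ L'
      · have he : p.2 = p.1 := le_antisymm h1 h2
        have hGp : 0 ≤ G p := by
          rw [hG]
          simp only []
          rw [he]
          exact real_inner_self_nonneg
        rw [hF, hF', Set.indicator_of_mem h1, Set.indicator_of_mem h2]
        linarith
      · rw [hF, hF', Set.indicator_of_mem h1, Set.indicator_of_notMem h2, add_zero]
    · have h2 : p ∈ L' := by
        simp only [hL', mem_setOf_eq]
        exact le_of_not_ge (by simpa [hL] using h1)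
      rw [hF, hF', Set.indicator_of_notMem h1, Set.indicator_of_mem h2, zero_add]
  have hGint_eq : ∫ p, G p ∂π = ‖Δ‖ ^ 2 := by
    calc ∫ p, G p ∂π = ∫ u, (∫ v, G (u, v) ∂κ) ∂κ := (myfub G hintG).symm
      _ = ∫ u, ⟪nv u, Δ⟫ ∂κ := by
          refine integral_congr_ae (.of_forall fun u => ?_)
          rw [hΔ]
          exact integral_inner (by rw [hκ]; exact h_int_on Q) (nv u)
      _ = ∫ u, ⟪Δ, nv u⟫ ∂κ := integral_congr_ae (.of_forall fun u => real_inner_comm _ _)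
      _ = ⟪Δ, Δ⟫ := by
          rw [integral_inner (by rw [hκ]; exact h_int_on Q) Δ, ← hΔ]
      _ = ‖Δ‖ ^ 2 := real_inner_self_eq_norm_sq _
  have hIΔ : ‖Δ‖ ^ 2 ≤ 2 * ∫ u, fI u ∂κ := by
    have hmono : ∫ p, G p ∂π ≤ ∫ p, (F p + F' p) ∂π :=
      integral_mono hintG (hintF.add hintF') hFF'G
    rw [integral_add hintF hintF', hI'_eq, hGint_eq, ← hI_eq] at hmono
    linarith
  -- combine everything
  have hI_hi : ∫ u, fI u ∂κ ≤ o * ν := hI_le_X.trans hX_le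
  have hRν : R₀ * ν ≤ M * ‖Δ‖ + o * ν - ∫ u, fI u ∂κ := by
    rw [hA_eq] at hA_ge
    linarith [hC_le, hX_le]
  have hRν2 : R₀ * ν ≤ M * ‖Δ‖ + o * ν := by
    have h0 : 0 ≤ ∫ u, fI u ∂κ := by nlinarith [sq_nonneg ‖Δ‖, hIΔ]
    linarith
  have hΔ2 : ‖Δ‖ ^ 2 ≤ 2 * (o * ν) := by linarith
  rcases eq_or_lt_of_le hν0 with hν00 | hνpos
  · rw [← hν00]; positivity
  · have hhalf : (R₀ / 2) * ν ≤ M * ‖Δ‖ := by nlinarith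
    have hsq : ((R₀ / 2) * ν) ^ 2 ≤ (M * ‖Δ‖) ^ 2 := by
      have h1 : 0 ≤ (R₀ / 2) * ν := by positivity
      nlinarith [hhalf]
    rw [div_mul_eq_mul_div, le_div_iff₀ (by positivity : (0:ℝ) < R₀ ^ 2)]
    nlinarith [hsq, hΔ2, sq_nonneg M, mul_nonneg hM0 (norm_nonneg Δ)]

lemma rec_estimate {d : ℕ} {D : Set (Euc d)} (hDconv : Convex ℝ D)
    {x₀ : Euc d} {R₀ : ℝ} (hR₀ : 0 < R₀) (hball : Metric.closedBall x₀ R₀ ⊆ D)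
    {T q : ℝ} (hq : 1 ≤ q) {ωc : ℝ → ℝ → ℝ} (hωc : IsControl T ωc)
    {w ξ φ : ℝ → Euc d} {μ : Measure ℝ} {nv : ℝ → Euc d}
    (hw : ContinuousOn w (Icc 0 T))
    (hwq : ∀ s t, 0 ≤ s → s ≤ t → t ≤ T → ‖w t - w s‖ ≤ ωc s t ^ (1 / q))
    (hsol : IsSkorohodSolution D T w ξ φ μ nv)
    {M : ℝ} (hMle : ∀ u ∈ Icc (0:ℝ) T, ‖ξ u - x₀‖ ≤ M)
    {s t : ℝ} (hs : 0 ≤ s) (hst : s ≤ t) (htT : t ≤ T) :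
    ∀ n : ℕ, ∀ a, s ≤ a → a ≤ t → ωc a t < ((n:ℝ) + 1) * (R₀ / 2) ^ q →
      (μ (Ioc a t)).toReal ≤ ((n:ℝ) + 1) * (8 * M ^ 2 / R₀ ^ 2) * supOsc w s t := by
  haveI : IsFiniteMeasure μ := hsol.finite
  have hq0 : (0:ℝ) < q := lt_of_lt_of_le one_pos hq
  have hc0 : (0:ℝ) < (R₀ / 2) ^ q := Real.rpow_pos_of_pos (by positivity) q
  have hM0 : 0 ≤ M := (norm_nonneg _).trans (hMle s ⟨hs, hst.trans htT⟩)
  have hosc_st : 0 ≤ supOsc w s t := supOsc_nonneg w s t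
  have hB0 : (0:ℝ) ≤ 8 * M ^ 2 / R₀ ^ 2 := by positivity
  have hcq : ((R₀ / 2 : ℝ) ^ q) ^ (1 / q) = R₀ / 2 := by
    rw [← Real.rpow_mul (by positivity : (0:ℝ) ≤ R₀ / 2), mul_one_div, div_self (ne_of_gt hq0),
      Real.rpow_one]
  -- small-oscillation step packaged
  have hstep : ∀ a b : ℝ, s ≤ a → a ≤ b → b ≤ t → supOsc w a b ≤ R₀ / 2 →
      (μ (Ioc a b)).toReal ≤ 8 * M ^ 2 / R₀ ^ 2 * supOsc w s t := by
    intro a b h1 h2 h3 h4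
    calc (μ (Ioc a b)).toReal ≤ 8 * M ^ 2 / R₀ ^ 2 * supOsc w a b :=
          key_estimate hDconv hR₀ hball hw hsol hMle (hs.trans h1) h2 (h3.trans htT) h4
      _ ≤ 8 * M ^ 2 / R₀ ^ 2 * supOsc w s t :=
          mul_le_mul_of_nonneg_left (supOsc_mono hw hs htT h1 h3) hB0
  intro n
  induction n with
  | zero =>
    intro a haa hat hω
    have hωnn : 0 ≤ ωc a t := hωc.nonneg a t (hs.trans haa) hat htT
    have hosc : supOsc w a t ≤ R₀ / 2 := by
      calc supOsc w a t ≤ ωc a t ^ (1 / q) :=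
            supOsc_le_rpow hωc hq hwq (hs.trans haa) hat htT
        _ ≤ ((R₀ / 2) ^ q) ^ (1 / q) := by
            apply Real.rpow_le_rpow hωnn _ (by positivity)
            push_cast at hω
            linarith
        _ = R₀ / 2 := hcq
    have := hstep a t haa hat le_rfl hosc
    push_cast
    linarith
  | succ n ih =>
    intro a haa hat hω
    have hωnn : 0 ≤ ωc a t := hωc.nonneg a t (hs.trans haa) hat htT
    by_cases hcase : supOsc w a t ≤ R₀ / 2
    · calc (μ (Ioc a t)).toReal ≤ 8 * M ^ 2 / R₀ ^ 2 * supOsc w s t :=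
            hstep a t haa hat le_rfl hcase
        _ ≤ ((n:ℝ) + 1 + 1) * (8 * M ^ 2 / R₀ ^ 2) * supOsc w s t := by
            have h1 : (1:ℝ) ≤ (n:ℝ) + 1 + 1 := by
              have := Nat.cast_nonneg (α := ℝ) n; linarith
            nlinarith [mul_nonneg hB0 hosc_st]
        _ = (((n+1 : ℕ):ℝ) + 1) * (8 * M ^ 2 / R₀ ^ 2) * supOsc w s t := by push_cast; ring
    · -- we must split off an interval with ω-budget exactly (R₀/2)^q
      have hωlarge : (R₀ / 2) ^ q ≤ ωc a t := by
        have h1 : R₀ / 2 < supOsc w a t := not_le.1 hcase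
        have h2 : supOsc w a t ≤ ωc a t ^ (1 / q) :=
          supOsc_le_rpow hωc hq hwq (hs.trans haa) hat htT
        calc (R₀ / 2 : ℝ) ^ q ≤ (ωc a t ^ (1 / q)) ^ q :=
              Real.rpow_le_rpow (by positivity) (by linarith) (le_of_lt hq0)
          _ = ωc a t := by
              rw [← Real.rpow_mul hωnn, one_div, inv_mul_cancel₀ (ne_of_gt hq0), Real.rpow_one]
      have hcont : ContinuousOn (fun v => ωc a v) (Icc a t) := by
        have hmap : MapsTo (fun v : ℝ => ((a:ℝ), v)) (Icc a t)
            {p : ℝ × ℝ | 0 ≤ p.1 ∧ p.1 ≤ p.2 ∧ p.2 ≤ T} :=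
          fun v hv => ⟨hs.trans haa, hv.1, hv.2.trans htT⟩
        exact hωc.cont.comp ((continuous_const.prodMk continuous_id).continuousOn) hmap
      have hmem : (R₀ / 2 : ℝ) ^ q ∈ Icc (ωc a a) (ωc a t) := by
        rw [omega_self hωc (hs.trans haa) (hat.trans htT)]
        exact ⟨le_of_lt hc0, hωlarge⟩
      obtain ⟨b, hbmem, hbeq0⟩ := intermediate_value_Icc hat hcont hmem
      have hbeq : ωc a b = (R₀ / 2) ^ q := hbeq0
      have hosc_ab : supOsc w a b ≤ R₀ / 2 := by
        calc supOsc w a b ≤ ωc a b ^ (1 / q) :=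
              supOsc_le_rpow hωc hq hwq (hs.trans haa) hbmem.1 (hbmem.2.trans htT)
          _ = R₀ / 2 := by rw [hbeq]; exact hcq
      have hω_bt : ωc b t < ((n:ℝ) + 1) * (R₀ / 2) ^ q := by
        have hsup := hωc.superadd a b t (hs.trans haa) hbmem.1 hbmem.2 htT
        rw [hbeq] at hsup
        push_cast at hω
        linarith
      have h1 := hstep a b haa hbmem.1 hbmem.2 hosc_ab
      have h2 := ih b (haa.trans hbmem.1) hbmem.2 hω_bt
      have hsplit : (μ (Ioc a t)).toReal = (μ (Ioc a b)).toReal + (μ (Ioc b t)).toReal := by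
        rw [← Ioc_union_Ioc_eq_Ioc hbmem.1 hbmem.2,
          measure_union (Ioc_disjoint_Ioc_of_le le_rfl) measurableSet_Ioc,
          ENNReal.toReal_add (measure_ne_top _ _) (measure_ne_top _ _)]
      rw [hsplit]
      push_cast
      linarith

/-- estimate on the local time term of the Skorohod problem on a convex
domain, in terms of `M = max_{0 ≤ t ≤ T} |ξ(t) − x₀|`. -/
theorem stmt7 {d : ℕ} (D : Set (Euc d)) (hDopen : IsOpen D) (hDne : D.Nonempty)
    (hDconv : Convex ℝ D) (x₀ : Euc d) (hx₀ : x₀ ∈ D) (R₀ : ℝ) (hR₀ : 0 < R₀)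
    (hball : Metric.closedBall x₀ R₀ ⊆ D)
    (T q : ℝ) (hT : 0 < T) (hq : 1 ≤ q) (ωc : ℝ → ℝ → ℝ) (hωc : IsControl T ωc)
    (w : ℝ → Euc d) (hw : ContinuousOn w (Icc 0 T)) (hw0 : w 0 ∈ closure D)
    (hwq : ∀ s t, 0 ≤ s → s ≤ t → t ≤ T → ‖w t - w s‖ ≤ ωc s t ^ (1 / q))
    (ξ φ : ℝ → Euc d) (μ : Measure ℝ) (nv : ℝ → Euc d)
    (hsol : IsSkorohodSolution D T w ξ φ μ nv)
    (M : ℝ) (hM : M = ⨆ t : Icc (0:ℝ) T, ‖ξ t.1 - x₀‖) :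
    ∀ s t, 0 ≤ s → s ≤ t → t ≤ T →
      totalVar φ s t ≤
        10 * ((16 * R₀⁻¹ * Real.sqrt (1 + 4 * R₀⁻¹ ^ 2 * M ^ 2) + 1) ^ q * ωc s t + 1) *
          (1 + 4 * R₀⁻¹ ^ 2 * M ^ 2) * supOsc w s t := by
  intro s t hs hst htT
  haveI : IsFiniteMeasure μ := hsol.finite
  have hq0 : (0:ℝ) < q := lt_of_lt_of_le one_pos hq
  -- the sup defining M bounds every value
  have hMle : ∀ u ∈ Icc (0:ℝ) T, ‖ξ u - x₀‖ ≤ M := by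
    obtain ⟨C, hC⟩ := isCompact_Icc.exists_bound_of_continuousOn
      (hsol.cont_ξ.sub continuousOn_const)
    have hbdd : BddAbove (Set.range fun u : Icc (0:ℝ) T => ‖ξ u.1 - x₀‖) := by
      refine ⟨C, ?_⟩
      rintro x ⟨u, rfl⟩
      exact hC u.1 u.2
    intro u hu
    rw [hM]
    exact le_ciSup hbdd (⟨u, hu⟩ : Icc (0:ℝ) T)
  have hM0 : 0 ≤ M := (norm_nonneg _).trans (hMle s ⟨hs, hst.trans htT⟩)
  -- identify the total variation with the measure of `Ioc s t`
  have htv : totalVar φ s t = (μ (Ioc s t)).toReal := by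
    have h := eVariationOn.Icc_add_Icc φ (s := (univ : Set ℝ)) hs hst (mem_univ s)
    simp only [Set.univ_inter] at h
    have h1 := hsol.total_var s ⟨hs, hst.trans htT⟩
    have h2 := hsol.total_var t ⟨hs.trans hst, htT⟩
    have hdisj : Disjoint (Icc (0:ℝ) s) (Ioc s t) := by
      rw [Set.disjoint_left]
      intro x hx1 hx2
      exact absurd hx1.2 (not_le.2 hx2.1)
    have hmeas : μ (Icc 0 t) = μ (Icc 0 s) + μ (Ioc s t) := by
      rw [← Icc_union_Ioc_eq_Icc hs hst, measure_union hdisj measurableSet_Ioc]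
    rw [h1, h2, hmeas] at h
    have := (ENNReal.add_right_inj (measure_ne_top μ (Icc 0 s))).1 h
    rw [totalVar, this]
  set c : ℝ := (R₀ / 2) ^ q with hcdef
  have hc : 0 < c := Real.rpow_pos_of_pos (by positivity) q
  have hωnn : 0 ≤ ωc s t := hωc.nonneg s t hs hst htT
  set n : ℕ := ⌊ωc s t / c⌋₊ with hn
  have hω_lt : ωc s t < ((n:ℝ) + 1) * c := by
    have h := Nat.lt_floor_add_one (ωc s t / c)
    rw [div_lt_iff₀ hc] at h
    linarith
  have hrec := rec_estimate hDconv hR₀ hball hq hωc hw hwq hsol hMle hs hst htT n s le_rfl hst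
    hω_lt
  have hn_le : ((n:ℝ) + 1) ≤ ωc s t / c + 1 := by
    have := Nat.floor_le (by positivity : (0:ℝ) ≤ ωc s t / c)
    linarith
  rw [htv]
  set X : ℝ := R₀⁻¹ ^ 2 * M ^ 2 with hX
  have hX0 : 0 ≤ X := by positivity
  set K : ℝ := 16 * R₀⁻¹ * Real.sqrt (1 + 4 * X) + 1 with hK
  have hsqrt1 : (1:ℝ) ≤ Real.sqrt (1 + 4 * X) :=
    calc (1:ℝ) = Real.sqrt 1 := Real.sqrt_one.symm
      _ ≤ Real.sqrt (1 + 4 * X) := Real.sqrt_le_sqrt (by linarith)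
  have hKge : 2 / R₀ ≤ K := by
    have h1 : (16:ℝ) * R₀⁻¹ * 1 ≤ 16 * R₀⁻¹ * Real.sqrt (1 + 4 * X) :=
      mul_le_mul_of_nonneg_left hsqrt1 (by positivity)
    have h2 : (2:ℝ) / R₀ ≤ 16 * R₀⁻¹ := by
      rw [div_eq_mul_inv]
      have : (0:ℝ) ≤ R₀⁻¹ := by positivity
      linarith
    rw [hK]
    linarith
  have hcinv : c⁻¹ ≤ K ^ q := by
    have h1 : c⁻¹ = (2 / R₀) ^ q := by
      rw [hcdef, ← Real.inv_rpow (by positivity : (0:ℝ) ≤ R₀ / 2)]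
      congr 1
      field_simp
    rw [h1]
    exact Real.rpow_le_rpow (by positivity) hKge (le_of_lt hq0)
  have hB : 8 * M ^ 2 / R₀ ^ 2 = 8 * X := by
    rw [hX, inv_pow]
    field_simp
  have hosc0 : 0 ≤ supOsc w s t := supOsc_nonneg w s t
  have hKq0 : 0 ≤ K ^ q := Real.rpow_nonneg (by positivity) q
  -- final numeric comparison
  have hfinal : ((n:ℝ) + 1) * (8 * M ^ 2 / R₀ ^ 2) ≤
      10 * (K ^ q * ωc s t + 1) * (1 + 4 * X) := by
    rw [hB]
    have h1 : ((n:ℝ) + 1) * (8 * X) ≤ (ωc s t * c⁻¹ + 1) * (8 * X) := by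
      apply mul_le_mul_of_nonneg_right _ (by positivity)
      rw [div_eq_mul_inv] at hn_le
      linarith
    refine h1.trans ?_
    have h2 : ωc s t * c⁻¹ ≤ ωc s t * K ^ q := mul_le_mul_of_nonneg_left hcinv hωnn
    nlinarith [mul_nonneg hωnn hKq0, mul_nonneg (mul_nonneg hωnn hKq0) hX0,
      mul_nonneg hωnn (le_of_lt (inv_pos.2 hc)), mul_nonneg hX0 (mul_nonneg hωnn hKq0)]
  calc (μ (Ioc s t)).toReal ≤ ((n:ℝ) + 1) * (8 * M ^ 2 / R₀ ^ 2) * supOsc w s t := hrec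
    _ ≤ 10 * (K ^ q * ωc s t + 1) * (1 + 4 * X) * supOsc w s t :=
        mul_le_mul_of_nonneg_right hfinal hosc0
    _ = 10 * ((16 * R₀⁻¹ * Real.sqrt (1 + 4 * R₀⁻¹ ^ 2 * M ^ 2) + 1) ^ q * ωc s t + 1) *
          (1 + 4 * R₀⁻¹ ^ 2 * M ^ 2) * supOsc w s t := by
        rw [hK, hX]
        ring_nf

end
end

section
/- Let D be a convex domain in ℝ^d, x₀ ∈ D, R₀ > 0 with cl(B(x₀, R₀)) ⊆ D. Suppose (ξ, φ) solves the Skorohod problem for a continuous path w on D, and let R be any number with R ≥ R₀ and R ≥ max_{0 ≤ t ≤ T} |ξ(t) − x₀|. Then (ξ, φ) also solves the Skorohod problem for w on the convex domain D_R = D ∩ B(x₀, R) (with the inward normal sets computed for D_R). -/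
open MeasureTheory ProbabilityTheory Set RealInnerProductSpace

noncomputable section

lemma normalCone_mono {d : ℕ} {D E : Set (Euc d)} (h : E ⊆ D) (x : Euc d) :
    normalCone D x ⊆ normalCone E x := by
  intro n hn
  simp only [normalCone, mem_iUnion, normalSet, mem_setOf_eq] at hn ⊢
  obtain ⟨r, hr, hn1, hempty⟩ := hn
  exact ⟨r, hr, hn1, subset_empty_iff.mp (hempty ▸ inter_subset_inter_right _ h)⟩


/-- a solution of the Skorohod problem on a convex domain `D` is also a
solution of the Skorohod problem on `D_R = D ∩ B(x₀, R)` whenever `R ≥ R₀` and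
`R ≥ max_{0 ≤ t ≤ T} |ξ(t) − x₀|` (with the normal sets computed for `D_R`). -/
theorem stmt8 {d : ℕ} (D : Set (Euc d)) (hDopen : IsOpen D) (hDne : D.Nonempty)
    (hDconv : Convex ℝ D) (x₀ : Euc d) (hx₀ : x₀ ∈ D) (R₀ : ℝ) (hR₀ : 0 < R₀)
    (hball : Metric.closedBall x₀ R₀ ⊆ D)
    (T : ℝ) (hT : 0 < T) (w : ℝ → Euc d) (hw : ContinuousOn w (Icc 0 T))
    (hw0 : w 0 ∈ closure D)
    (ξ φ : ℝ → Euc d) (μ : Measure ℝ) (nv : ℝ → Euc d)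
    (hsol : IsSkorohodSolution D T w ξ φ μ nv)
    (R : ℝ) (hR : R₀ ≤ R) (hRM : (⨆ t : Icc (0:ℝ) T, ‖ξ t.1 - x₀‖) ≤ R) :
    IsSkorohodSolution (D ∩ Metric.ball x₀ R) T w ξ φ μ nv := by
  have hR0 : (0:ℝ) < R := lt_of_lt_of_le hR₀ hR
  -- the sup is attained boundedly
  have hbdd : BddAbove (Set.range fun t : Icc (0:ℝ) T => ‖ξ t.1 - x₀‖) := by
    have hc : ContinuousOn (fun t => ‖ξ t - x₀‖) (Icc 0 T) :=
      (hsol.cont_ξ.sub continuousOn_const).norm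
    have := (isCompact_Icc (a := (0:ℝ)) (b := T)).image_of_continuousOn hc
    rw [Set.image_eq_range] at this
    exact this.bddAbove
  have hle : ∀ t ∈ Icc (0:ℝ) T, ‖ξ t - x₀‖ ≤ R := by
    intro t ht
    exact le_trans (le_ciSup hbdd ⟨t, ht⟩) hRM
  -- key closure fact
  have key : ∀ y ∈ closure D, ‖y - x₀‖ ≤ R → y ∈ closure (D ∩ Metric.ball x₀ R) := by
    intro y hy hyR
    have hmemseg : ∀ l ∈ Ioo (0:ℝ) 1, x₀ + l • (y - x₀) ∈ D ∩ Metric.ball x₀ R := by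
      intro l hl
      constructor
      · have hseg : x₀ + l • (y - x₀) ∈ openSegment ℝ x₀ y := by
          rw [openSegment_eq_image']
          exact ⟨l, hl, rfl⟩
        have := hDconv.openSegment_interior_closure_subset_interior
          (by rw [hDopen.interior_eq]; exact hx₀) hy hseg
        rwa [hDopen.interior_eq] at this
      · rw [Metric.mem_ball, dist_eq_norm]
        have : x₀ + l • (y - x₀) - x₀ = l • (y - x₀) := by abel
        rw [this, norm_smul, Real.norm_eq_abs, abs_of_pos hl.1]
        calc l * ‖y - x₀‖ ≤ l * R := by
              exact mul_le_mul_of_nonneg_left hyR hl.1.le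
          _ < 1 * R := by exact mul_lt_mul_of_pos_right hl.2 hR0
          _ = R := one_mul R
    have hlam : ∀ n : ℕ, (1 - 1/(n+2) : ℝ) ∈ Ioo (0:ℝ) 1 := by
      intro n
      constructor
      · have h2 : (1:ℝ)/(n+2) ≤ 1/2 := by
          apply div_le_div_of_nonneg_left one_pos.le (by norm_num)
          · push_cast; linarith [Nat.cast_nonneg (α := ℝ) n]
        linarith
      · have : (0:ℝ) < 1/(n+2) := by positivity
        linarith
    have htend : Filter.Tendsto (fun n : ℕ => x₀ + (1 - 1/(n+2) : ℝ) • (y - x₀))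
        Filter.atTop (nhds y) := by
      have h1 : Filter.Tendsto (fun n : ℕ => (1 - 1/(n+2) : ℝ)) Filter.atTop (nhds 1) := by
        have h0 : Filter.Tendsto (fun n : ℕ => (1/(n+2) : ℝ)) Filter.atTop (nhds 0) := by
          have := tendsto_one_div_add_atTop_nhds_zero_nat (𝕜 := ℝ)
          have hcomp := this.comp (Filter.tendsto_add_atTop_nat 1)
          convert hcomp using 2 with n
          simp; push_cast; ring
        have := (tendsto_const_nhds (x := (1:ℝ)) (f := Filter.atTop (α := ℕ))).sub h0
        simpa using this
      have := (tendsto_const_nhds (x := x₀) (f := Filter.atTop (α := ℕ))).add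
        (h1.smul_const (y - x₀))
      simpa using this
    exact mem_closure_of_tendsto htend
      (Filter.Eventually.of_forall fun n => hmemseg _ (hlam n))
  have hopenR : IsOpen (D ∩ Metric.ball x₀ R) := hDopen.inter Metric.isOpen_ball
  refine
    { cont_ξ := hsol.cont_ξ
      cont_φ := hsol.cont_φ
      mem := fun t ht => key _ (hsol.mem t ht) (hle t ht)
      init := hsol.init
      decomp := hsol.decomp
      φ_zero := hsol.φ_zero
      finite := hsol.finite
      carrier := hsol.carrier
      meas_nv := hsol.meas_nv
      repr := hsol.repr
      total_var := hsol.total_var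
      bdry := ?_
      normal := ?_ }
  · have hsub : {s | ξ s ∉ frontier (D ∩ Metric.ball x₀ R)} ⊆
        {s | ξ s ∉ frontier D} ∪ (Icc 0 T)ᶜ := by
      intro s hs
      by_contra hcon
      simp only [mem_union, mem_setOf_eq, mem_compl_iff, not_or, not_not] at hcon
      obtain ⟨hfr, hIcc⟩ := hcon
      apply hs
      rw [hopenR.frontier_eq]
      refine ⟨key _ (hsol.mem s hIcc) (hle s hIcc), ?_⟩
      intro hmem
      have : ξ s ∉ D := by
        rw [hDopen.frontier_eq] at hfr
        exact hfr.2
      exact this hmem.1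
    exact measure_mono_null hsub
      (le_antisymm (le_trans (measure_union_le _ _)
        (by rw [hsol.bdry, hsol.carrier]; simp)) (zero_le)) 
  · filter_upwards [hsol.normal] with s hs
    exact normalCone_mono inter_subset_left _ hs


end
end

section
/- Let D be a convex domain in ℝ^d and let (ξ₁, φ₁) and (ξ₂, φ₂) solve the Skorohod problems for continuous paths w₁ and w₂ on D, with representing measures μ₁, μ₂ and direction functions n₁, n₂. Then for all 0 ≤ s ≤ t ≤ T: ∫_{(s,t]} ⟨ξ₁(u) − ξ₂(u), n₁(u)⟩ μ₁(du) − ∫_{(s,t]} ⟨ξ₁(u) − ξ₂(u), n₂(u)⟩ μ₂(du) ≤ 0. -/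
open MeasureTheory ProbabilityTheory Set RealInnerProductSpace

noncomputable section

lemma normal_inner_nonneg {d : ℕ} {D : Set (Euc d)} (hDopen : IsOpen D)
    (hDconv : Convex ℝ D) {x n : Euc d} (hx : x ∈ closure D)
    (hn : n ∈ normalCone D x) : ∀ y ∈ closure D, 0 ≤ ⟪y - x, n⟫ := by
  obtain ⟨hnorm, r, hr, hball⟩ : ‖n‖ = 1 ∧ ∃ r, 0 < r ∧ Metric.ball (x - r • n) r ∩ D = ∅ := by
    simpa [normalCone, normalSet, mem_iUnion] using hn
  -- step 1: for z ∈ D, ⟪z - x, n⟫ ≥ -‖z - x‖² / (2r)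
  have step1 : ∀ z ∈ D, -(‖z - x‖ ^ 2) / (2 * r) ≤ ⟪z - x, n⟫ := by
    intro z hz
    have hdist : r ≤ dist z (x - r • n) := by
      by_contra h
      push_neg at h
      exact absurd (mem_inter (Metric.mem_ball.2 h) hz) (by simp [hball])
    have hnormeq : ‖z - (x - r • n)‖ ^ 2 = ‖z - x‖ ^ 2 + 2 * r * ⟪z - x, n⟫ + r ^ 2 := by
      have : z - (x - r • n) = (z - x) + r • n := by abel
      rw [this, norm_add_sq_real, real_inner_smul_right, norm_smul]
      simp [hnorm, abs_of_pos hr]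
      ring
    have h2 : r ^ 2 ≤ ‖z - (x - r • n)‖ ^ 2 := by
      rw [dist_eq_norm] at hdist
      nlinarith [norm_nonneg (z - (x - r • n))]
    rw [hnormeq] at h2
    rw [div_le_iff₀ (by linarith)]
    nlinarith
  -- step 2: for y ∈ D, 0 ≤ ⟪y - x, n⟫
  have step2 : ∀ y ∈ D, 0 ≤ ⟪y - x, n⟫ := by
    intro y hy
    have hyint : y ∈ interior D := by rwa [hDopen.interior_eq]
    have key : ∀ t ∈ Ioc (0:ℝ) 1, -(t * ‖y - x‖ ^ 2) / (2 * r) ≤ ⟪y - x, n⟫ := by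
      intro t ht
      have hz : x + t • (y - x) ∈ interior D :=
        hDconv.add_smul_sub_mem_interior' hx hyint ht
      rw [hDopen.interior_eq] at hz
      have := step1 _ hz
      have heq : x + t • (y - x) - x = t • (y - x) := by abel
      rw [heq, real_inner_smul_left, norm_smul] at this
      have ht0 : 0 < t := ht.1
      rw [Real.norm_eq_abs, abs_of_pos ht0] at this
      have h2r : (0:ℝ) < 2 * r := by linarith
      rw [div_le_iff₀ h2r] at this ⊢
      nlinarith
    have htend : Filter.Tendsto (fun t : ℝ => -(t * ‖y - x‖ ^ 2) / (2 * r))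
        (nhdsWithin 0 (Ioi 0)) (nhds 0) := by
      have : Filter.Tendsto (fun t : ℝ => -(t * ‖y - x‖ ^ 2) / (2 * r))
          (nhds 0) (nhds (-(0 * ‖y - x‖ ^ 2) / (2 * r))) := by
        apply Filter.Tendsto.div_const
        exact (((continuous_id.mul continuous_const).neg).tendsto 0)
      simpa using this.mono_left nhdsWithin_le_nhds
    refine le_of_tendsto htend ?_
    filter_upwards [Ioo_mem_nhdsGT_of_mem (by norm_num : (0:ℝ) ∈ Ico (0:ℝ) 1)] with t ht
    exact key t ⟨ht.1, ht.2.le⟩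
  -- step 3: extend to closure
  intro y hy
  have hclosed : IsClosed {y : Euc d | 0 ≤ ⟪y - x, n⟫} :=
    isClosed_le continuous_const ((continuous_id.sub continuous_const).inner continuous_const)
  exact closure_minimal step2 hclosed hy

/-- for two Skorohod solutions on a convex domain,
`∫_{(s,t]} ⟨ξ₁ − ξ₂, n₁⟩ dμ₁ − ∫_{(s,t]} ⟨ξ₁ − ξ₂, n₂⟩ dμ₂ ≤ 0`. -/
theorem stmt11 {d : ℕ} (D : Set (Euc d)) (hDopen : IsOpen D) (hDne : D.Nonempty)
    (hDconv : Convex ℝ D) (T : ℝ) (hT : 0 < T)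
    (w₁ w₂ : ℝ → Euc d) (hw₁ : ContinuousOn w₁ (Icc 0 T)) (hw₂ : ContinuousOn w₂ (Icc 0 T))
    (hw₁0 : w₁ 0 ∈ closure D) (hw₂0 : w₂ 0 ∈ closure D)
    (ξ₁ φ₁ ξ₂ φ₂ : ℝ → Euc d) (μ₁ μ₂ : Measure ℝ) (nv₁ nv₂ : ℝ → Euc d)
    (hsol₁ : IsSkorohodSolution D T w₁ ξ₁ φ₁ μ₁ nv₁)
    (hsol₂ : IsSkorohodSolution D T w₂ ξ₂ φ₂ μ₂ nv₂) :
    ∀ s t : ℝ, 0 ≤ s → s ≤ t → t ≤ T →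
      (∫ u in Ioc s t, ⟪ξ₁ u - ξ₂ u, nv₁ u⟫ ∂μ₁) -
          (∫ u in Ioc s t, ⟪ξ₁ u - ξ₂ u, nv₂ u⟫ ∂μ₂) ≤ 0 := by
  intro s t hs hst htT
  have hIoc : Ioc s t ⊆ Icc 0 T := fun u hu => ⟨hs.trans hu.1.le, hu.2.trans htT⟩
  have h1 : (∫ u in Ioc s t, ⟪ξ₁ u - ξ₂ u, nv₁ u⟫ ∂μ₁) ≤ 0 := by
    apply integral_nonpos_of_ae
    refine ae_restrict_of_ae ?_
    have hT1 : ∀ᵐ u ∂μ₁, u ∈ Icc 0 T := by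
      rw [ae_iff]; exact hsol₁.carrier
    have hB : ∀ᵐ u ∂μ₁, ξ₁ u ∈ frontier D := by
      rw [ae_iff]; exact hsol₁.bdry
    filter_upwards [hT1, hB, hsol₁.normal] with u hu hfr hnc
    have hx : ξ₁ u ∈ closure D := frontier_subset_closure hfr
    have h0 : 0 ≤ ⟪ξ₂ u - ξ₁ u, nv₁ u⟫ :=
      normal_inner_nonneg hDopen hDconv hx hnc _ (hsol₂.mem u hu)
    have hneg : (⟪ξ₁ u - ξ₂ u, nv₁ u⟫ : ℝ) = -⟪ξ₂ u - ξ₁ u, nv₁ u⟫ := by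
      rw [← inner_neg_left, neg_sub]
    simp only [Pi.zero_apply]
    linarith
  have h2 : 0 ≤ (∫ u in Ioc s t, ⟪ξ₁ u - ξ₂ u, nv₂ u⟫ ∂μ₂) := by
    apply integral_nonneg_of_ae
    refine ae_restrict_of_ae ?_
    have hT2 : ∀ᵐ u ∂μ₂, u ∈ Icc 0 T := by
      rw [ae_iff]; exact hsol₂.carrier
    have hB : ∀ᵐ u ∂μ₂, ξ₂ u ∈ frontier D := by
      rw [ae_iff]; exact hsol₂.bdry
    filter_upwards [hT2, hB, hsol₂.normal] with u hu hfr hnc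
    have hx : ξ₂ u ∈ closure D := frontier_subset_closure hfr
    simpa using normal_inner_nonneg hDopen hDconv hx hnc _ (hsol₁.mem u hu)
  linarith


end
end

section
/- Let D be a convex domain in ℝ^d. Let w : [0,T] → ℝ^n be absolutely continuous with derivative g ∈ L¹([0,T]; ℝ^n), and suppose (x, φ) is a pair of continuous paths such that (x, φ) solves the Skorohod problem on D for the path y(t) = x₀ + ∫₀^t σ(x(s)) g(s) ds + ∫₀^t b(x(s)) ds, where x₀ ∈ cl(D). Then the total variation of x satisfies ‖x‖_{[0,T]} ≤ 2(√2 + 1)(‖σ‖_∞ ∫₀^T |g(s)| ds + ‖b‖_∞ T); in particular max_{0 ≤ t ≤ T} |x(t) − x₀| is bounded by the same quantity. -/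
open MeasureTheory ProbabilityTheory Set RealInnerProductSpace

noncomputable section

lemma normal_inner_nonneg_s12 {d : ℕ} {D : Set (Euc d)} (hDconv : Convex ℝ D)
    {p z nn : Euc d} (hp : p ∈ closure D) (hz : z ∈ closure D)
    (hn : nn ∈ normalCone D p) : 0 ≤ ⟪z - p, nn⟫ := by
  rcases Set.mem_iUnion₂.1 hn with ⟨r, hr, hmem⟩
  obtain ⟨hn1, hball⟩ := hmem
  have key : ∀ l : ℝ, 0 < l → l ≤ 1 → 0 ≤ l * ‖z - p‖^2 + 2*r*⟪z - p, nn⟫ := by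
    intro l hl hl1
    have hq : p + l • (z - p) ∈ closure D := by
      have h2 := hDconv.closure hp hz (by linarith : (0:ℝ) ≤ 1 - l) hl.le (by ring)
      convert h2 using 1
      module
    have hq2 : p + l • (z - p) ∉ Metric.ball (p - r • nn) r := by
      intro hmemb
      have h3 : p + l • (z - p) ∈ closure (Metric.ball (p - r • nn) r ∩ D) :=
        Metric.isOpen_ball.inter_closure ⟨hmemb, hq⟩
      rw [hball, closure_empty] at h3
      exact h3
    rw [Metric.mem_ball, dist_eq_norm] at hq2
    push_neg at hq2
    have heq : p + l • (z - p) - (p - r • nn) = l • (z - p) + r • nn := by module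
    rw [heq] at hq2
    have hsq : r^2 ≤ ‖l • (z - p) + r • nn‖^2 := by
      nlinarith [norm_nonneg (l • (z - p) + r • nn), hr.le]
    rw [norm_add_sq_real, norm_smul, norm_smul, real_inner_smul_left, real_inner_smul_right,
      hn1] at hsq
    rw [Real.norm_eq_abs, Real.norm_eq_abs, abs_of_pos hl, abs_of_pos hr] at hsq
    nlinarith [sq_nonneg (‖z - p‖), hl, hr]
  by_contra hcon
  push_neg at hcon
  set I := ⟪z - p, nn⟫ with hI
  set X := ‖z - p‖^2 with hX
  have hX0 : 0 ≤ X := sq_nonneg _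
  have hl0 : 0 < r * (-I) / (X + 1) := div_pos (mul_pos hr (by linarith)) (by linarith)
  set l := min 1 (r * (-I) / (X + 1)) with hldef
  have h1 := key l (lt_min one_pos hl0) (min_le_left _ _)
  have h2 : l * X ≤ r * (-I) := by
    calc l * X ≤ (r * (-I) / (X+1)) * X := mul_le_mul_of_nonneg_right (min_le_right _ _) hX0
    _ ≤ r * (-I) := by
        rw [div_mul_eq_mul_div, div_le_iff₀ (by linarith : (0:ℝ) < X + 1)]
        nlinarith
  nlinarith [mul_neg_of_pos_of_neg hr hcon]

set_option maxHeartbeats 2000000 in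
/-- total variation bound for the solution of a reflecting differential
equation on a convex domain driven by an absolutely continuous path with
`L¹`-derivative `g`. -/
theorem stmt12 {d n : ℕ} (D : Set (Euc d)) (hDopen : IsOpen D) (hDne : D.Nonempty)
    (hDconv : Convex ℝ D) (T : ℝ) (hT : 0 < T)
    (σ : Euc d → Euc n →L[ℝ] Euc d) (b : Euc d → Euc d)
    (hσc : Continuous σ) (hσb : ∃ C, ∀ z, ‖σ z‖ ≤ C)
    (hbc : Continuous b) (hbb : ∃ C, ∀ z, ‖b z‖ ≤ C)
    (g : ℝ → Euc n) (hg : IntegrableOn g (Icc 0 T))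
    (x₀ : Euc d) (hx₀ : x₀ ∈ closure D)
    (x φ : ℝ → Euc d) (μ : Measure ℝ) (nv : ℝ → Euc d)
    (y : ℝ → Euc d)
    (hy : ∀ t, y t = x₀ + (∫ s in Ioc (0:ℝ) t, σ (x s) (g s)) + ∫ s in Ioc (0:ℝ) t, b (x s))
    (hsol : IsSkorohodSolution D T y x φ μ nv) :
    totalVar x 0 T ≤
        2 * (Real.sqrt 2 + 1) *
          ((⨆ z, ‖σ z‖) * (∫ s in Icc (0:ℝ) T, ‖g s‖) + (⨆ z, ‖b z‖) * T) ∧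
      ∀ t ∈ Icc (0:ℝ) T,
        ‖x t - x₀‖ ≤
          2 * (Real.sqrt 2 + 1) *
            ((⨆ z, ‖σ z‖) * (∫ s in Icc (0:ℝ) T, ‖g s‖) + (⨆ z, ‖b z‖) * T) := by
  obtain ⟨hcx, hcφ, hmem, hinit, hdecomp, hφ0, hfin, hcarrier, hmeasnv, hrepr, htv, hbdry,
    hnormal⟩ := hsol
  haveI := hfin
  obtain ⟨Cσ, hCσ⟩ := hσb
  obtain ⟨Cb, hCb⟩ := hbb
  set S := ⨆ z, ‖σ z‖ with hSdef
  set B := ⨆ z, ‖b z‖ with hBdef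
  have hSb : ∀ z, ‖σ z‖ ≤ S :=
    fun z => le_ciSup ⟨Cσ, by rintro _ ⟨w, rfl⟩; exact hCσ w⟩ z
  have hBb : ∀ z, ‖b z‖ ≤ B :=
    fun z => le_ciSup ⟨Cb, by rintro _ ⟨w, rfl⟩; exact hCb w⟩ z
  have hS0 : 0 ≤ S := le_trans (norm_nonneg _) (hSb 0)
  have hB0 : 0 ≤ B := le_trans (norm_nonneg _) (hBb 0)
  set h : ℝ → Euc d := fun s => σ (x s) (g s) + b (x s) with hhdef
  -- measurability and integrability of h
  have hxm : AEMeasurable x (volume.restrict (Icc 0 T)) := hcx.aemeasurable measurableSet_Icc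
  have hh1m : AEStronglyMeasurable (fun s => σ (x s) (g s)) (volume.restrict (Icc 0 T)) := by
    have hp : AEStronglyMeasurable (fun s => (σ (x s), g s)) (volume.restrict (Icc 0 T)) :=
      ((hσc.comp_continuousOn hcx).aestronglyMeasurable measurableSet_Icc).prodMk
        hg.aestronglyMeasurable
    exact isBoundedBilinearMap_apply.continuous.comp_aestronglyMeasurable hp
  have hh1i : IntegrableOn (fun s => σ (x s) (g s)) (Icc 0 T) := by
    refine Integrable.mono' (hg.norm.const_mul S) hh1m ?_
    filter_upwards with s
    exact le_trans ((σ (x s)).le_opNorm (g s))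
      (mul_le_mul_of_nonneg_right (hSb _) (norm_nonneg _))
  have hh2i : IntegrableOn (fun s => b (x s)) (Icc 0 T) :=
    (hbc.comp_continuousOn hcx).integrableOn_compact isCompact_Icc
  have hhi : IntegrableOn h (Icc 0 T) := hh1i.add hh2i
  -- nv integrability
  have hnv1 : ∀ᵐ w ∂μ, ‖nv w‖ = 1 := by
    filter_upwards [hnormal] with w hw
    rcases Set.mem_iUnion₂.1 hw with ⟨r, hr, hmem'⟩
    exact hmem'.1
  have hnvint : Integrable nv μ := by
    refine Integrable.mono' (integrable_const 1) hmeasnv.aestronglyMeasurable ?_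
    filter_upwards [hnv1] with w hw
    rw [hw]
  have haeIcc : ∀ᵐ w ∂μ, w ∈ Icc 0 T := by
    rw [ae_iff]
    simpa [Set.compl_def] using hcarrier
  -- key a.e. normal property
  have hkey : ∀ᵐ w ∂μ, ‖nv w‖ = 1 ∧ ∀ z ∈ closure D, ⟪x w - z, nv w⟫ ≤ 0 := by
    filter_upwards [hnormal, haeIcc, hnv1] with w hw hwIcc hw1
    refine ⟨hw1, fun z hz => ?_⟩
    have h0 := normal_inner_nonneg_s12 hDconv (hmem w hwIcc) hz hw
    have heq : x w - z = -(z - x w) := by abel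
    rw [heq, inner_neg_left]
    linarith
  -- interval splitting lemmas
  have hsubIcc : ∀ a c : ℝ, 0 ≤ a → c ≤ T → Ioc a c ⊆ Icc 0 T := fun a c ha hc =>
    subset_trans Set.Ioc_subset_Icc_self (Set.Icc_subset_Icc ha hc)
  have hdisj : ∀ a c : ℝ, Disjoint (Ioc (0:ℝ) a) (Ioc a c) := by
    intro a c
    exact Set.disjoint_left.2 fun w hw1 hw2 => absurd hw1.2 (not_le.2 hw2.1)
  have hsplit : ∀ (j : ℝ → Euc d), IntegrableOn j (Icc 0 T) → ∀ a c : ℝ,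
      0 ≤ a → a ≤ c → c ≤ T →
      (∫ s in Ioc 0 c, j s) - (∫ s in Ioc 0 a, j s) = ∫ s in Ioc a c, j s := by
    intro j hj a c h0a hac hcT
    have hu : Ioc 0 a ∪ Ioc a c = Ioc 0 c := Set.Ioc_union_Ioc_eq_Ioc h0a hac
    rw [← hu, setIntegral_union (hdisj a c) measurableSet_Ioc
      (hj.mono_set (hsubIcc 0 a le_rfl (le_trans hac hcT)))
      (hj.mono_set (hsubIcc a c h0a hcT))]
    abel
  have hydiff : ∀ a c : ℝ, 0 ≤ a → a ≤ c → c ≤ T → y c - y a = ∫ s in Ioc a c, h s := by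
    intro a c h0a hac hcT
    have e1 := hsplit _ hh1i a c h0a hac hcT
    have e2 := hsplit _ hh2i a c h0a hac hcT
    have e3 : ∫ s in Ioc a c, h s =
        (∫ s in Ioc a c, σ (x s) (g s)) + ∫ s in Ioc a c, b (x s) := by
      rw [hhdef]
      exact integral_add (hh1i.mono_set (hsubIcc a c h0a hcT))
        (hh2i.mono_set (hsubIcc a c h0a hcT))
    rw [hy a, hy c, e3, ← e1, ← e2]
    abel
  have hφdiff : ∀ a c : ℝ, 0 ≤ a → a ≤ c → c ≤ T →
      φ c - φ a = ∫ s in Ioc a c, nv s ∂μ := by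
    intro a c h0a hac hcT
    rw [hrepr a ⟨h0a, le_trans hac hcT⟩, hrepr c ⟨le_trans h0a hac, hcT⟩]
    have hu : Icc 0 a ∪ Ioc a c = Icc 0 c := Set.Icc_union_Ioc_eq_Icc h0a hac
    have hd : Disjoint (Icc (0:ℝ) a) (Ioc a c) :=
      Set.disjoint_left.2 fun w hw1 hw2 => absurd hw1.2 (not_le.2 hw2.1)
    rw [← hu, setIntegral_union hd measurableSet_Ioc hnvint.integrableOn hnvint.integrableOn]
    abel
  have hxdiff : ∀ a c : ℝ, 0 ≤ a → a ≤ c → c ≤ T →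
      x c - x a = (y c - y a) + (φ c - φ a) := by
    intro a c h0a hac hcT
    rw [hdecomp a ⟨h0a, le_trans hac hcT⟩, hdecomp c ⟨le_trans h0a hac, hcT⟩]
    abel
  -- F and G
  set F : ℝ → ℝ := fun t => ∫ s in Ioc 0 t, ‖h s‖ with hFdef
  set G : ℝ → ℝ := fun t => (μ (Ioc 0 t)).toReal with hGdef
  have hFdiff : ∀ a c : ℝ, 0 ≤ a → a ≤ c → c ≤ T →
      F c - F a = ∫ s in Ioc a c, ‖h s‖ := by
    intro a c h0a hac hcT
    have hu : Ioc 0 a ∪ Ioc a c = Ioc 0 c := Set.Ioc_union_Ioc_eq_Ioc h0a hac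
    have hhni : IntegrableOn (fun s => ‖h s‖) (Icc 0 T) := hhi.norm
    show (∫ s in Ioc 0 c, ‖h s‖) - (∫ s in Ioc 0 a, ‖h s‖) = _
    rw [← hu, setIntegral_union (hdisj a c) measurableSet_Ioc
      (hhni.mono_set (hsubIcc 0 a le_rfl (le_trans hac hcT)))
      (hhni.mono_set (hsubIcc a c h0a hcT))]
    ring
  have hGdiff : ∀ a c : ℝ, 0 ≤ a → a ≤ c → c ≤ T →
      G c - G a = (μ (Ioc a c)).toReal := by
    intro a c h0a hac hcT
    have hu : Ioc 0 a ∪ Ioc a c = Ioc 0 c := Set.Ioc_union_Ioc_eq_Ioc h0a hac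
    have : μ (Ioc 0 c) = μ (Ioc 0 a) + μ (Ioc a c) := by
      rw [← hu, measure_union (hdisj a c) measurableSet_Ioc]
    rw [hGdef]
    simp only [this, ENNReal.toReal_add (measure_ne_top μ _) (measure_ne_top μ _)]
    ring
  have hFnonneg : ∀ t, 0 ≤ F t := fun t => setIntegral_nonneg measurableSet_Ioc
    (fun s _ => norm_nonneg _)
  have hFd_nonneg : ∀ a c : ℝ, 0 ≤ a → a ≤ c → c ≤ T → 0 ≤ F c - F a := by
    intro a c h0a hac hcT
    rw [hFdiff a c h0a hac hcT]
    exact setIntegral_nonneg measurableSet_Ioc (fun s _ => norm_nonneg _)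
  have hFmono : ∀ a c : ℝ, 0 ≤ a → a ≤ c → c ≤ T → F a ≤ F c := fun a c h0a hac hcT => by
    linarith [hFd_nonneg a c h0a hac hcT]

  -- uniform continuity
  have hUC : ∀ ε > 0, ∃ δ > 0, ∀ a ∈ Icc 0 T, ∀ c ∈ Icc 0 T, dist a c ≤ δ → ‖x a - x c‖ ≤ ε := by
    have huc := isCompact_Icc.uniformContinuousOn_of_continuous hcx
    rw [Metric.uniformContinuousOn_iff_le] at huc
    intro ε hε
    obtain ⟨δ, hδ, hδ'⟩ := huc ε hε
    exact ⟨δ, hδ, fun a ha c hc hd => by rw [← dist_eq_norm]; exact hδ' a ha c hc hd⟩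
  have himg : Bornology.IsBounded (x '' Icc 0 T) :=
    (isCompact_Icc.image_of_continuousOn hcx).isBounded
  set Mtot := (μ univ).toReal with hMdef
  have hM0 : 0 ≤ Mtot := ENNReal.toReal_nonneg
  have hGder : ∀ a c : ℝ, 0 ≤ a → a ≤ c → c ≤ T → 0 ≤ G c - G a ∧ G c - G a ≤ Mtot := by
    intro a c h0a hac hcT
    rw [hGdiff a c h0a hac hcT]
    exact ⟨ENNReal.toReal_nonneg,
      ENNReal.toReal_mono (measure_ne_top μ _) (measure_mono (subset_univ _))⟩
  have core : ∀ u v : ℝ, 0 ≤ u → u ≤ v → v ≤ T →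
      ‖x v - x u‖^2 ≤ 2 * Metric.diam (x '' Icc u v) * (F v - F u) := by
    intro u v h0u huv hvT
    have hv0 : 0 ≤ v := le_trans h0u huv
    have huT : u ≤ T := le_trans huv hvT
    have huIcc : u ∈ Icc 0 T := ⟨h0u, huT⟩
    set K := Metric.diam (x '' Icc u v) with hKdef
    have hK0 : 0 ≤ K := Metric.diam_nonneg
    have hbd : Bornology.IsBounded (x '' Icc u v) :=
      himg.subset (Set.image_mono (f := x) (Set.Icc_subset_Icc h0u hvT))
    refine le_of_forall_pos_le_add ?_
    intro ε hε
    set C := (F v - F u) + 3 * Mtot + 1 with hCdef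
    have hC0 : 0 < C := by
      have := hFd_nonneg u v h0u huv hvT
      linarith
    set ε0 := ε / C with hε0def
    have hε0 : 0 < ε0 := div_pos hε hC0
    obtain ⟨δ, hδ, hδ'⟩ := hUC ε0 hε0
    obtain ⟨m, hm0, hmδ⟩ : ∃ m : ℕ, 0 < m ∧ v - u ≤ δ * m := by
      refine ⟨max 1 ⌈(v - u) / δ⌉₊, lt_of_lt_of_le one_pos (le_max_left _ _), ?_⟩
      have h1 : (v - u)/δ ≤ (⌈(v-u)/δ⌉₊ : ℝ) := Nat.le_ceil _
      have h2 : ((⌈(v-u)/δ⌉₊ : ℕ) : ℝ) ≤ ((max 1 ⌈(v-u)/δ⌉₊ : ℕ) : ℝ) := by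
        exact_mod_cast le_max_right 1 _
      rw [div_le_iff₀ hδ] at h1
      nlinarith
    have hmR : (0:ℝ) < m := by exact_mod_cast hm0
    set st := (v - u)/m with hstdef
    have hst0 : 0 ≤ st := div_nonneg (by linarith) hmR.le
    have hstδ : st ≤ δ := by rw [hstdef, div_le_iff₀ hmR]; linarith
    set p : ℕ → ℝ := fun k => u + k * st with hpdef
    have hpval : ∀ k : ℕ, p k = u + k * st := fun k => by rw [hpdef]
    have hp0 : p 0 = u := by rw [hpval]; simp
    have hpm : p m = v := by
      rw [hpval, hstdef]; field_simp; ring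
    have hpgap : ∀ k : ℕ, p (k+1) - p k = st := by
      intro k; rw [hpval, hpval]; push_cast; ring
    have hxmono : ∀ k : ℕ, p k ≤ p (k+1) := fun k => by
      have := hpgap k; linarith
    have hpIcc : ∀ k : ℕ, k ≤ m → p k ∈ Icc u v := by
      intro k hk
      have hkm : (k:ℝ) ≤ m := by exact_mod_cast hk
      have hk0 : (0:ℝ) ≤ (k:ℝ) := Nat.cast_nonneg k
      constructor
      · rw [hpval]; nlinarith
      · rw [hpval]
        have : (k:ℝ) * st ≤ m * st := mul_le_mul_of_nonneg_right hkm hst0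
        have hv' : u + m * st = v := by rw [← hpm, hpval]
        linarith
    have step : ∀ k : ℕ, k < m →
        ‖x (p (k+1)) - x u‖^2 - ‖x (p k) - x u‖^2 ≤
          (2*K + ε0) * (F (p (k+1)) - F (p k)) + 3*ε0 * (G (p (k+1)) - G (p k)) := by
      intro k hk
      have ha : p k ∈ Icc u v := hpIcc k hk.le
      have hb : p (k+1) ∈ Icc u v := hpIcc (k+1) hk
      have haT : p k ∈ Icc 0 T := ⟨le_trans h0u ha.1, le_trans ha.2 hvT⟩
      have hbT : p (k+1) ∈ Icc 0 T := ⟨le_trans h0u hb.1, le_trans hb.2 hvT⟩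
      have hab : p k ≤ p (k+1) := hxmono k
      have hΔy : y (p (k+1)) - y (p k) = ∫ s in Ioc (p k) (p (k+1)), h s :=
        hydiff _ _ haT.1 hab hbT.2
      have hΔφ : φ (p (k+1)) - φ (p k) = ∫ s in Ioc (p k) (p (k+1)), nv s ∂μ :=
        hφdiff _ _ haT.1 hab hbT.2
      have hΔx : x (p (k+1)) - x (p k) =
          (y (p (k+1)) - y (p k)) + (φ (p (k+1)) - φ (p k)) :=
        hxdiff _ _ haT.1 hab hbT.2
      have hFd : F (p (k+1)) - F (p k) = ∫ s in Ioc (p k) (p (k+1)), ‖h s‖ :=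
        hFdiff _ _ haT.1 hab hbT.2
      have hGd : G (p (k+1)) - G (p k) = (μ (Ioc (p k) (p (k+1)))).toReal :=
        hGdiff _ _ haT.1 hab hbT.2
      have hny : ‖y (p (k+1)) - y (p k)‖ ≤ F (p (k+1)) - F (p k) := by
        rw [hΔy, hFd]
        exact norm_integral_le_integral_norm _
      have hnφ : ‖φ (p (k+1)) - φ (p k)‖ ≤ G (p (k+1)) - G (p k) := by
        rw [hΔφ, hGd]
        calc ‖∫ s in Ioc (p k) (p (k+1)), nv s ∂μ‖ ≤ ∫ s in Ioc (p k) (p (k+1)), ‖nv s‖ ∂μ :=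
          norm_integral_le_integral_norm _
        _ ≤ ∫ _ in Ioc (p k) (p (k+1)), (1:ℝ) ∂μ := by
            refine integral_mono_ae hnvint.norm.integrableOn (integrable_const 1) ?_
            filter_upwards [ae_restrict_of_ae hnv1] with w hw
            rw [hw]
        _ = (μ (Ioc (p k) (p (k+1)))).toReal := by
            rw [setIntegral_const, smul_eq_mul, mul_one, measureReal_def]
      have hdistk : ‖x (p (k+1)) - x (p k)‖ ≤ ε0 := by
        refine hδ' _ hbT _ haT ?_
        rw [Real.dist_eq, abs_of_nonneg (by linarith [hpgap k] : (0:ℝ) ≤ p (k+1) - p k)]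
        linarith [hpgap k]
      have hnormxk : ‖x (p k) - x u‖ ≤ K := by
        rw [← dist_eq_norm]
        exact Metric.dist_le_diam_of_mem hbd (mem_image_of_mem x ha)
          (mem_image_of_mem x ⟨le_refl u, huv⟩)
      have hinner_y : ⟪x (p k) - x u, y (p (k+1)) - y (p k)⟫ ≤ K * (F (p (k+1)) - F (p k)) :=
        le_trans (real_inner_le_norm _ _) (mul_le_mul hnormxk hny (norm_nonneg _) hK0)
      have hinner_φ : ⟪x (p k) - x u, φ (p (k+1)) - φ (p k)⟫ ≤
          ε0 * (G (p (k+1)) - G (p k)) := by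
        rw [hΔφ, ← integral_inner hnvint.integrableOn]
        have hae : ∀ᵐ s ∂(μ.restrict (Ioc (p k) (p (k+1)))),
            ⟪x (p k) - x u, nv s⟫ ≤ ε0 := by
          filter_upwards [ae_restrict_of_ae hkey, ae_restrict_mem measurableSet_Ioc]
            with w hw hwmem
          have hwT : w ∈ Icc 0 T := ⟨le_trans haT.1 hwmem.1.le, le_trans hwmem.2 hbT.2⟩
          have h1 : ⟪x (p k) - x w, nv w⟫ ≤ ‖x (p k) - x w‖ * ‖nv w‖ := real_inner_le_norm _ _
          have h2 : ⟪x w - x u, nv w⟫ ≤ 0 := hw.2 (x u) (hmem u huIcc)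
          have h3 : ‖x (p k) - x w‖ ≤ ε0 := by
            refine hδ' _ haT _ hwT ?_
            rw [Real.dist_eq, abs_of_nonpos (by linarith [hwmem.1] : p k - w ≤ 0)]
            have := hpgap k
            have := hwmem.2
            linarith
          have hsum : ⟪x (p k) - x u, nv w⟫ =
              ⟪x (p k) - x w, nv w⟫ + ⟪x w - x u, nv w⟫ := by
            rw [← inner_add_left]
            congr 1
            abel
          rw [hsum, hw.1, mul_one] at *
          linarith
        calc (∫ s in Ioc (p k) (p (k+1)), ⟪x (p k) - x u, nv s⟫ ∂μ) ≤
            ∫ _ in Ioc (p k) (p (k+1)), ε0 ∂μ :=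
          integral_mono_ae ((hnvint.const_inner _).integrableOn) (integrable_const _) hae
        _ = ε0 * (G (p (k+1)) - G (p k)) := by
            rw [setIntegral_const, smul_eq_mul, hGd, mul_comm, measureReal_def]
      have hsq : ‖x (p (k+1)) - x (p k)‖^2 ≤
          ε0 * ((F (p (k+1)) - F (p k)) + (G (p (k+1)) - G (p k))) := by
        have hn1 : ‖x (p (k+1)) - x (p k)‖ ≤
            (F (p (k+1)) - F (p k)) + (G (p (k+1)) - G (p k)) := by
          rw [hΔx]
          exact le_trans (norm_add_le _ _) (add_le_add hny hnφ)
        calc ‖x (p (k+1)) - x (p k)‖^2 = ‖x (p (k+1)) - x (p k)‖ * ‖x (p (k+1)) - x (p k)‖ :=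
          pow_two (‖x (p (k+1)) - x (p k)‖)
        _ ≤ ε0 * ((F (p (k+1)) - F (p k)) + (G (p (k+1)) - G (p k))) :=
          mul_le_mul hdistk hn1 (norm_nonneg _) hε0.le
      have hexpand : ‖x (p (k+1)) - x u‖^2 - ‖x (p k) - x u‖^2 =
          2*⟪x (p k) - x u, x (p (k+1)) - x (p k)⟫ + ‖x (p (k+1)) - x (p k)‖^2 := by
        have hsplit2 : x (p (k+1)) - x u = (x (p k) - x u) + (x (p (k+1)) - x (p k)) := by abel
        rw [hsplit2, norm_add_sq_real]
        ring
      have hinner_split : ⟪x (p k) - x u, x (p (k+1)) - x (p k)⟫ =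
          ⟪x (p k) - x u, y (p (k+1)) - y (p k)⟫ + ⟪x (p k) - x u, φ (p (k+1)) - φ (p k)⟫ := by
        rw [hΔx, inner_add_right]
      rw [hexpand, hinner_split]
      linarith
    have hsum1 : ‖x v - x u‖^2 =
        ∑ k ∈ Finset.range m, (‖x (p (k+1)) - x u‖^2 - ‖x (p k) - x u‖^2) := by
      rw [Finset.sum_range_sub (fun k => ‖x (p k) - x u‖^2), hp0, hpm]
      simp
    have hsum2 : ∑ k ∈ Finset.range m,
        ((2*K + ε0) * (F (p (k+1)) - F (p k)) + 3*ε0 * (G (p (k+1)) - G (p k))) =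
        (2*K + ε0) * (F v - F u) + 3*ε0 * (G v - G u) := by
      rw [Finset.sum_add_distrib, ← Finset.mul_sum, ← Finset.mul_sum,
        Finset.sum_range_sub (fun k => F (p k)), Finset.sum_range_sub (fun k => G (p k)),
        hp0, hpm]
    have hle := Finset.sum_le_sum (fun k hk => step k (Finset.mem_range.1 hk))
    rw [← hsum1, hsum2] at hle
    have hGuv := hGder u v h0u huv hvT
    have hFuv := hFd_nonneg u v h0u huv hvT
    have hC1 : ε0 * C = ε := div_mul_cancel₀ ε (ne_of_gt hC0)
    nlinarith [hε0.le]

  have hhni : IntegrableOn (fun s => ‖h s‖) (Icc 0 T) := hhi.norm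
  -- oscillation bound
  have hosc : ∀ s t : ℝ, 0 ≤ s → s ≤ t → t ≤ T →
      Metric.diam (x '' Icc s t) ≤ 2 * (F t - F s) := by
    intro s t h0s hst htT
    set K := Metric.diam (x '' Icc s t) with hKdef
    have hK0 : 0 ≤ K := Metric.diam_nonneg
    have hFst := hFd_nonneg s t h0s hst htT
    have hbd : Bornology.IsBounded (x '' Icc s t) :=
      himg.subset (Set.image_mono (f := x) (Set.Icc_subset_Icc h0s htT))
    have hcnn : 0 ≤ 2 * K * (F t - F s) := by positivity
    have hKle : K ≤ Real.sqrt (2 * K * (F t - F s)) := by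
      apply Metric.diam_le_of_forall_dist_le (Real.sqrt_nonneg _)
      have main : ∀ w1 w2 : ℝ, w1 ∈ Icc s t → w2 ∈ Icc s t → w1 ≤ w2 →
          dist (x w1) (x w2) ≤ Real.sqrt (2*K*(F t - F s)) := by
        intro w1 w2 hw1 hw2 h12
        have hc := core w1 w2 (le_trans h0s hw1.1) h12 (le_trans hw2.2 htT)
        have hdm : Metric.diam (x '' Icc w1 w2) ≤ K :=
          Metric.diam_mono (Set.image_mono (f := x) (Set.Icc_subset_Icc hw1.1 hw2.2)) hbd
        have hFm : F w2 - F w1 ≤ F t - F s := by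
          have e1 := hFmono s w1 h0s hw1.1 (le_trans hw1.2 htT)
          have e2 := hFmono w2 t (le_trans h0s hw2.1) hw2.2 htT
          linarith
        have hF12 := hFd_nonneg w1 w2 (le_trans h0s hw1.1) h12 (le_trans hw2.2 htT)
        have hsq : dist (x w1) (x w2)^2 ≤ 2*K*(F t - F s) := by
          rw [dist_eq_norm']
          calc ‖x w2 - x w1‖^2 ≤ 2 * Metric.diam (x '' Icc w1 w2) * (F w2 - F w1) := hc
          _ ≤ 2*K*(F t - F s) :=
              mul_le_mul (by linarith) hFm hF12 (by linarith)
        have := Real.sqrt_le_sqrt hsq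
        rwa [Real.sqrt_sq dist_nonneg] at this
      rintro a ⟨w1, hw1, rfl⟩ a2 ⟨w2, hw2, rfl⟩
      rcases le_total w1 w2 with h12 | h21
      · exact main w1 w2 hw1 hw2 h12
      · rw [dist_comm]; exact main w2 w1 hw2 hw1 h21
    have hK2 : K*K ≤ 2*K*(F t - F s) := by
      nlinarith [Real.sq_sqrt hcnn, Real.sqrt_nonneg (2*K*(F t - F s))]
    rcases eq_or_lt_of_le hK0 with hK | hK
    · linarith
    · nlinarith
  have hpair : ∀ s t : ℝ, 0 ≤ s → s ≤ t → t ≤ T → ‖x t - x s‖ ≤ 2 * (F t - F s) := by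
    intro s t h0s hst htT
    have hbd : Bornology.IsBounded (x '' Icc s t) :=
      himg.subset (Set.image_mono (f := x) (Set.Icc_subset_Icc h0s htT))
    rw [← dist_eq_norm]
    exact le_trans (Metric.dist_le_diam_of_mem hbd
      (mem_image_of_mem x ⟨hst, le_refl t⟩) (mem_image_of_mem x ⟨le_refl s, hst⟩))
      (hosc s t h0s hst htT)
  have hF0 : F 0 = 0 := by
    rw [hFdef]
    simp
  have hx00 : x 0 = x₀ := by
    rw [hinit, hy 0]
    simp
  have hFTeq : F T = ∫ s in Ioc (0:ℝ) T, ‖h s‖ := by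
    linarith [hFdiff 0 T le_rfl hT.le le_rfl, hF0]
  set Ig := ∫ s in Icc (0:ℝ) T, ‖g s‖ with hIgdef
  have hintg0 : 0 ≤ Ig :=
    setIntegral_nonneg measurableSet_Icc fun s _ => norm_nonneg _
  have hsubT : Ioc (0:ℝ) T ⊆ Icc 0 T := hsubIcc 0 T le_rfl le_rfl
  have hFT : F T ≤ S * Ig + B * T := by
    have hple : ∀ s : ℝ, ‖h s‖ ≤ S * ‖g s‖ + B := by
      intro s
      calc ‖h s‖ ≤ ‖σ (x s) (g s)‖ + ‖b (x s)‖ := norm_add_le _ _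
      _ ≤ S * ‖g s‖ + B := add_le_add (le_trans ((σ (x s)).le_opNorm (g s))
          (mul_le_mul_of_nonneg_right (hSb _) (norm_nonneg _))) (hBb _)
    have hconst : IntegrableOn (fun _ : ℝ => B) (Icc 0 T) :=
      integrableOn_const measure_Icc_lt_top.ne
    have hgS : IntegrableOn (fun s => S * ‖g s‖) (Icc 0 T) := hg.norm.const_mul S
    have hSB : IntegrableOn (fun s => S * ‖g s‖ + B) (Icc 0 T) := hgS.add hconst
    have hint1 : IntegrableOn (fun s => S * ‖g s‖ + B) (Ioc 0 T) := hSB.mono_set hsubT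
    have step1 : (∫ s in Ioc (0:ℝ) T, ‖h s‖) ≤ ∫ s in Ioc (0:ℝ) T, (S * ‖g s‖ + B) :=
      integral_mono_ae (hhni.mono_set hsubT) hint1 (Filter.Eventually.of_forall hple)
    have step2 : (∫ s in Ioc (0:ℝ) T, (S * ‖g s‖ + B)) =
        S * (∫ s in Ioc (0:ℝ) T, ‖g s‖) + B * T := by
      rw [integral_add (hgS.mono_set hsubT) (hconst.mono_set hsubT),
        integral_const_mul, setIntegral_const, smul_eq_mul, measureReal_def, Real.volume_Ioc]
      rw [ENNReal.toReal_ofReal (by linarith)]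
      ring
    have step3 : (∫ s in Ioc (0:ℝ) T, ‖g s‖) ≤ Ig := by
      rw [hIgdef]
      exact setIntegral_mono_set hg.norm (Filter.Eventually.of_forall fun s => norm_nonneg _)
        (HasSubset.Subset.eventuallyLE hsubT)
    have := mul_le_mul_of_nonneg_left step3 hS0
    rw [hFTeq]
    linarith
  have hinner0 : 0 ≤ S * Ig + B * T :=
    add_nonneg (mul_nonneg hS0 hintg0) (mul_nonneg hB0 hT.le)
  have h2FT : 2 * F T ≤ 2 * (Real.sqrt 2 + 1) * (S * Ig + B * T) := by
    nlinarith [mul_nonneg (Real.sqrt_nonneg 2) hinner0]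
  constructor
  · have hvar : eVariationOn x (Icc 0 T) ≤ ENNReal.ofReal (2 * F T) := by
      apply iSup_le
      rintro ⟨nn, uu, humono, humem⟩
      calc (∑ i ∈ Finset.range nn, edist (x (uu (i+1))) (x (uu i)))
          ≤ ∑ i ∈ Finset.range nn, ENNReal.ofReal (2*F (uu (i+1)) - 2*F (uu i)) := by
            refine Finset.sum_le_sum fun i _ => ?_
            rw [edist_dist]
            refine ENNReal.ofReal_le_ofReal ?_
            rw [dist_eq_norm]
            have := hpair (uu i) (uu (i+1)) (humem i).1 (humono (Nat.le_succ i)) (humem (i+1)).2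
            linarith
        _ = ENNReal.ofReal (∑ i ∈ Finset.range nn, (2*F (uu (i+1)) - 2*F (uu i))) := by
            rw [ENNReal.ofReal_sum_of_nonneg]
            intro i _
            have := hFmono (uu i) (uu (i+1)) (humem i).1 (humono (Nat.le_succ i)) (humem (i+1)).2
            linarith
        _ = ENNReal.ofReal (2*F (uu nn) - 2*F (uu 0)) := by
            rw [Finset.sum_range_sub (fun i => 2*F (uu i))]
        _ ≤ ENNReal.ofReal (2 * F T) := by
            refine ENNReal.ofReal_le_ofReal ?_
            have h1 := hFmono (uu nn) T (humem nn).1 (humem nn).2 le_rfl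
            have h2 : 0 ≤ F (uu 0) := hFnonneg _
            linarith
    have htvle : totalVar x 0 T ≤ 2 * F T :=
      ENNReal.toReal_le_of_le_ofReal (by linarith [hFnonneg T]) hvar
    linarith
  · intro t ht
    have hp := hpair 0 t le_rfl ht.1 ht.2
    rw [hx00, hF0] at hp
    have hFt := hFmono t T ht.1 ht.2 le_rfl
    linarith



end
end
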